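/- arXiv:2201.10957 — 3 statements merged into one kernel-verified Lean document; each statement's English description precedes it below -/
import Mathlib

section
/- Let A be a K×K left-stochastic matrix that is strongly connected (primitive), with Perron vector π (the unique vector with positive entries summing to 1 satisfying Aπ = π). Let (A_n)_{n≥1} be i.i.d. random K×K matrices, each taking values in the set of left-stochastic 0/1-valued matrices, with E[A_n] = A. Fix α ∈ [0,1) and set ᾱ = 1−α. For a fixed k, define the random probability vectors w_0 = e_k (the k-th standard basis vector) and w_n = (αI + ᾱA_n) w_{n−1}. Then the Cesàro averages converge almost surely to the Perron vector: (1/i) Σ_{n=1}^{i} w_n → π almost surely as i → ∞. -/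
open MeasureTheory ProbabilityTheory Filter Topology
open scoped ENNReal

variable {K : ℕ}

/-- A `K × K` matrix (encoded as `Fin K → Fin K → ℝ`, entry `M ℓ k` in row `ℓ`, column `k`)
is left-stochastic if it has nonnegative entries and each column sums to 1. -/
def LeftStochastic (M : Fin K → Fin K → ℝ) : Prop :=
  (∀ l k, 0 ≤ M l k) ∧ ∀ k, ∑ l, M l k = 1

/-- A 0/1-valued matrix. -/
def ZeroOne (M : Fin K → Fin K → ℝ) : Prop := ∀ l k, M l k = 0 ∨ M l k = 1

/-- Strong connectivity of the matrix: between every ordered pair of vertices there is a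
path of positive-weight edges, and at least one diagonal entry is positive. -/
def StronglyConnected (M : Fin K → Fin K → ℝ) : Prop :=
  (∀ k l : Fin K, ∃ m : ℕ, 0 < ((Matrix.of M) ^ (m + 1)) l k) ∧ ∃ k, 0 < M k k

/-- The update map `v ↦ (α I + (1-α) M) v`. -/
def upd (α : ℝ) (M : Fin K → Fin K → ℝ) (v : Fin K → ℝ) : Fin K → ℝ :=
  fun j => α * v j + (1 - α) * ∑ l, M j l * v l

lemma upd_add (α : ℝ) (M : Fin K → Fin K → ℝ) (u v : Fin K → ℝ) (j : Fin K) :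
    upd α M (fun i => u i + v i) j = upd α M u j + upd α M v j := by
  simp only [upd, mul_add, Finset.sum_add_distrib]
  ring

lemma upd_simplex {α : ℝ} (hα0 : 0 ≤ α) (hα1 : α < 1) {M : Fin K → Fin K → ℝ}
    (hM : LeftStochastic M) {v : Fin K → ℝ} (hv0 : ∀ j, 0 ≤ v j) (hv1 : ∑ j, v j = 1) :
    (∀ j, 0 ≤ upd α M v j) ∧ ∑ j, upd α M v j = 1 := by
  constructor
  · intro j
    have h1 : 0 ≤ ∑ l, M j l * v l :=
      Finset.sum_nonneg fun l _ => mul_nonneg (hM.1 j l) (hv0 l)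
    have h2 : (0:ℝ) ≤ 1 - α := by linarith
    exact add_nonneg (mul_nonneg hα0 (hv0 j)) (mul_nonneg h2 h1)
  · simp only [upd]
    rw [Finset.sum_add_distrib, ← Finset.mul_sum, ← Finset.mul_sum, hv1, Finset.sum_comm]
    have : ∀ l, ∑ j, M j l * v l = v l := by
      intro l
      rw [← Finset.sum_mul, hM.2 l, one_mul]
    rw [Finset.sum_congr rfl fun l _ => this l, hv1]
    ring

lemma pow_nonneg_entries {A : Fin K → Fin K → ℝ} (hA : ∀ l k, 0 ≤ A l k) (p : ℕ) :
    ∀ l k, 0 ≤ ((Matrix.of A) ^ p) l k := by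
  induction p with
  | zero => intro l k; simp [Matrix.one_apply]; positivity
  | succ p ih =>
      intro l k
      rw [pow_succ, Matrix.mul_apply]
      exact Finset.sum_nonneg fun i _ => mul_nonneg (ih l i) (hA i k)

lemma pow_fix {A : Fin K → Fin K → ℝ} {u : Fin K → ℝ}
    (hfix : ∀ j, ∑ l, A j l * u l = u j) (p : ℕ) :
    ∀ j, ∑ l, ((Matrix.of A) ^ p) j l * u l = u j := by
  induction p with
  | zero => intro j; simp [Matrix.one_apply]
  | succ p ih =>
      intro j
      have : ∀ l, ((Matrix.of A) ^ (p + 1)) j l = ∑ i, ((Matrix.of A) ^ p) j i * A i l := by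
        intro l; rw [pow_succ, Matrix.mul_apply]; rfl
      calc ∑ l, ((Matrix.of A) ^ (p+1)) j l * u l
          = ∑ l, ∑ i, ((Matrix.of A) ^ p) j i * A i l * u l := by
            refine Finset.sum_congr rfl fun l _ => ?_
            rw [this l, Finset.sum_mul]
        _ = ∑ i, ((Matrix.of A) ^ p) j i * (∑ l, A i l * u l) := by
            rw [Finset.sum_comm]
            refine Finset.sum_congr rfl fun i _ => ?_
            rw [Finset.mul_sum]
            refine Finset.sum_congr rfl fun l _ => by ring
        _ = u j := by
            rw [Finset.sum_congr rfl fun i _ => by rw [hfix i]]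
            exact ih j

lemma perron_unique [NeZero K] (A : Fin K → Fin K → ℝ) (hA : LeftStochastic A)
    (hAsc : StronglyConnected A)
    (π : Fin K → ℝ) (hπpos : ∀ j, 0 < π j) (hπsum : ∑ j, π j = 1)
    (hπfix : ∀ j, ∑ l, A j l * π l = π j)
    (v : Fin K → ℝ) (hv0 : ∀ j, 0 ≤ v j) (hv1 : ∑ j, v j = 1)
    (hvfix : ∀ j, ∑ l, A j l * v l = v j) : v = π := by
  have : Nonempty (Fin K) := ⟨⟨0, Nat.pos_of_ne_zero (NeZero.ne K)⟩⟩
  obtain ⟨j0, _, hj0⟩ := Finset.exists_min_image Finset.univ (fun j => v j / π j)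
    ⟨Classical.arbitrary (Fin K), Finset.mem_univ _⟩
  set c : ℝ := v j0 / π j0 with hc
  set u : Fin K → ℝ := fun j => v j - c * π j with hu
  have hu0 : ∀ j, 0 ≤ u j := by
    intro j
    have h := hj0 j (Finset.mem_univ j)
    have hπj := hπpos j
    rw [hu]
    simp only
    rw [sub_nonneg]
    calc c * π j ≤ (v j / π j) * π j := by
          exact mul_le_mul_of_nonneg_right h hπj.le
      _ = v j := by field_simp
  have huj0 : u j0 = 0 := by
    have := (hπpos j0).ne'
    rw [hu]; simp only [hc]
    field_simp
    ring
  have hufix : ∀ j, ∑ l, A j l * u l = u j := by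
    intro j
    simp only [hu, mul_sub, Finset.sum_sub_distrib, hvfix j]
    congr 1
    rw [← hπfix j, Finset.mul_sum]
    exact Finset.sum_congr rfl fun l _ => by ring
  have huzero : ∀ l, u l = 0 := by
    by_contra h
    push_neg at h
    obtain ⟨l, hl⟩ := h
    have hlpos : 0 < u l := lt_of_le_of_ne (hu0 l) (Ne.symm hl)
    obtain ⟨m, hm⟩ := hAsc.1 l j0
    have hpos : 0 < ∑ l', ((Matrix.of A) ^ (m+1)) j0 l' * u l' := by
      refine Finset.sum_pos' (fun i _ => mul_nonneg (pow_nonneg_entries hA.1 (m+1) j0 i) (hu0 i))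
        ⟨l, Finset.mem_univ l, mul_pos hm hlpos⟩
    rw [pow_fix hufix (m+1) j0, huj0] at hpos
    exact lt_irrefl 0 hpos
  have hveq : ∀ j, v j = c * π j := by
    intro j
    have := huzero j
    rw [hu] at this
    simpa [sub_eq_zero] using this
  have hcsum : c = 1 := by
    have : ∑ j, v j = c * ∑ j, π j := by
      rw [Finset.mul_sum]
      exact Finset.sum_congr rfl fun j _ => hveq j
    rw [hv1, hπsum, mul_one] at this
    exact this.symm
  funext j
  rw [hveq j, hcsum, one_mul]

lemma continuous_upd_coord (α : ℝ) (A : Fin K → Fin K → ℝ) (j : Fin K) :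
    Continuous (fun v : Fin K → ℝ => upd α A v j) := by
  unfold upd
  exact ((continuous_const.mul (continuous_apply j)).add
    (continuous_const.mul (continuous_finset_sum _ fun l _ =>
      continuous_const.mul (continuous_apply l))))

lemma cesaro_det [NeZero K] (A : Fin K → Fin K → ℝ) (hA : LeftStochastic A)
    (hAsc : StronglyConnected A)
    (π : Fin K → ℝ) (hπpos : ∀ j, 0 < π j) (hπsum : ∑ j, π j = 1)
    (hπfix : ∀ j, ∑ l, A j l * π l = π j)
    (α : ℝ) (hα0 : 0 ≤ α) (hα1 : α < 1)
    (v : ℕ → Fin K → ℝ) (hv0 : ∀ i j, 0 ≤ v i j) (hv1 : ∀ i, ∑ j, v i j = 1)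
    (hlim : ∀ j, Tendsto (fun i => v i j - upd α A (v i) j) atTop (𝓝 0)) :
    Tendsto v atTop (𝓝 π) := by
  set Δ : Set (Fin K → ℝ) := {x | (∀ j, 0 ≤ x j) ∧ ∑ j, x j = 1} with hΔ
  have hsub : Δ ⊆ Set.pi Set.univ (fun _ : Fin K => Set.Icc (0:ℝ) 1) := by
    rintro x ⟨hx0, hx1⟩ j _
    refine ⟨hx0 j, ?_⟩
    calc x j ≤ ∑ j', x j' := Finset.single_le_sum (fun j' _ => hx0 j') (Finset.mem_univ j)
      _ = 1 := hx1
  have hclosed : IsClosed Δ := by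
    have h1 : IsClosed {x : Fin K → ℝ | ∀ j, 0 ≤ x j} := by
      have : {x : Fin K → ℝ | ∀ j, 0 ≤ x j} = ⋂ j, {x | 0 ≤ x j} := by
        ext x; simp [Set.mem_iInter]
      rw [this]
      exact isClosed_iInter fun j => isClosed_le continuous_const (continuous_apply j)
    have h2 : IsClosed {x : Fin K → ℝ | ∑ j, x j = 1} :=
      isClosed_eq (continuous_finset_sum _ fun j _ => continuous_apply j) continuous_const
    exact h1.inter h2
  have hcomp : IsCompact Δ :=
    (isCompact_univ_pi fun _ => isCompact_Icc).of_isClosed_subset hclosed hsub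
  apply tendsto_of_subseq_tendsto
  intro ns hns
  obtain ⟨a, haΔ, φ, hφmono, hφtend⟩ := hcomp.tendsto_subseq
    (x := fun n => v (ns n)) (fun n => ⟨hv0 _, hv1 _⟩)
  have hcomp2 : Tendsto (fun n => ns (φ n)) atTop atTop := hns.comp hφmono.tendsto_atTop
  have hafix : ∀ j, a j - upd α A a j = 0 := by
    intro j
    have h1 : Tendsto (fun n => v (ns (φ n)) j - upd α A (v (ns (φ n))) j) atTop (𝓝 0) :=
      (hlim j).comp hcomp2
    have h2 : Tendsto (fun n => v (ns (φ n)) j - upd α A (v (ns (φ n))) j) atTop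
        (𝓝 (a j - upd α A a j)) := by
      have ha : Tendsto (fun n => v (ns (φ n))) atTop (𝓝 a) := hφtend
      exact ((continuous_apply j).tendsto a |>.comp ha).sub
        (((continuous_upd_coord α A j).tendsto a).comp ha)
    exact tendsto_nhds_unique h2 h1
  have hAfix : ∀ j, ∑ l, A j l * a l = a j := by
    intro j
    have := hafix j
    unfold upd at this
    have hne : (1:ℝ) - α ≠ 0 := by linarith
    have : (1 - α) * ∑ l, A j l * a l = (1 - α) * a j := by linarith
    exact mul_left_cancel₀ hne this
  have : a = π := perron_unique A hA hAsc π hπpos hπsum hπfix a haΔ.1 haΔ.2 hAfix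
  exact ⟨φ, this ▸ hφtend⟩

lemma sum_Icc_one (g : ℕ → ℝ) (i : ℕ) :
    ∑ n ∈ Finset.Icc 1 i, g n = ∑ m ∈ Finset.range i, g (m + 1) := by
  induction i with
  | zero => simp
  | succ i ih =>
      rw [Finset.sum_Icc_succ_top (Nat.le_add_left 1 i), ih, Finset.sum_range_succ]

/-- The running martingale part. -/
def Yd (α : ℝ) (A : Fin K → Fin K → ℝ) {Ω : Type*} (w : ℕ → Ω → Fin K → ℝ)
    (i : ℕ) (ω : Ω) : Fin K → ℝ :=
  fun j => ∑ n ∈ Finset.range i, (w (n + 1) ω j - upd α A (w n ω) j)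

lemma measurable_updP (α : ℝ) :
    Measurable (fun p : ((Fin K → Fin K → ℝ) × (Fin K → ℝ)) => upd α p.1 p.2) := by
  apply measurable_pi_lambda
  intro j
  have h1 : Measurable (fun p : ((Fin K → Fin K → ℝ) × (Fin K → ℝ)) => α * p.2 j) :=
    (((measurable_pi_apply j).comp measurable_snd : Measurable fun p : ((Fin K → Fin K → ℝ) × (Fin K → ℝ)) => p.2 j)).const_mul α
  have h2 : Measurable (fun p : ((Fin K → Fin K → ℝ) × (Fin K → ℝ)) =>
      (1 - α) * ∑ l, p.1 j l * p.2 l) := by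
    refine Measurable.const_mul (Finset.measurable_sum _ fun l _ => ?_) _
    exact (((measurable_pi_apply l).comp ((measurable_pi_apply j).comp measurable_fst))).mul
      ((measurable_pi_apply l).comp measurable_snd)
  exact h1.add h2

lemma exists_g {Ω : Type*} [MeasurableSpace Ω] (α : ℝ) (A : Fin K → Fin K → ℝ)
    (An : ℕ → Ω → Fin K → Fin K → ℝ) (w : ℕ → Ω → Fin K → ℝ) (v0 : Fin K → ℝ)
    (hw0 : ∀ ω, w 0 ω = v0)
    (hwrec : ∀ n ω, w (n + 1) ω = upd α (An (n + 1) ω) (w n ω)) (i : ℕ) :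
    ∃ g : (Fin i → (Fin K → Fin K → ℝ)) → ((Fin K → ℝ) × (Fin K → ℝ)),
      Measurable g ∧ ∀ ω, g (fun m => An (m + 1) ω) = (w i ω, Yd α A w i ω) := by
  induction i with
  | zero =>
      refine ⟨fun _ => (v0, fun _ => 0), measurable_const, fun ω => ?_⟩
      rw [hw0 ω]
      refine Prod.ext rfl ?_
      funext j
      simp [Yd]
  | succ i ih =>
      obtain ⟨g, hgm, hgeq⟩ := ih
      set r : (Fin (i + 1) → (Fin K → Fin K → ℝ)) → (Fin i → (Fin K → Fin K → ℝ)) :=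
        fun x m => x m.castSucc with hr_def
      have hr : Measurable r := measurable_pi_lambda _ fun m => measurable_pi_apply _
      have h1 : Measurable (fun x => g (r x)) := hgm.comp hr
      have hlast : Measurable (fun x : (Fin (i+1) → (Fin K → Fin K → ℝ)) => x (Fin.last i)) :=
        measurable_pi_apply _
      have hupd1 : Measurable (fun x => upd α (x (Fin.last i)) (g (r x)).1) :=
        (measurable_updP α).comp (hlast.prodMk (measurable_fst.comp h1))
      have hupdA : Measurable (fun x => upd α A (g (r x)).1) :=
        (measurable_updP α).comp (measurable_const.prodMk (measurable_fst.comp h1))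
      refine ⟨fun x => (upd α (x (Fin.last i)) (g (r x)).1,
        fun j => (g (r x)).2 j + (upd α (x (Fin.last i)) (g (r x)).1 j - upd α A (g (r x)).1 j)),
        ?_, ?_⟩
      · refine hupd1.prodMk (measurable_pi_lambda _ fun j => ?_)
        exact ((measurable_pi_apply j).comp (measurable_snd.comp h1)).add
          (((measurable_pi_apply j).comp hupd1).sub ((measurable_pi_apply j).comp hupdA))
      · intro ω
        have hrx : r (fun m : Fin (i+1) => An (m + 1) ω) = fun m : Fin i => An (m + 1) ω := by
          funext m
          simp [hr_def]
        have hgx : g (r (fun m : Fin (i+1) => An (m + 1) ω)) = (w i ω, Yd α A w i ω) := by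
          rw [hrx, hgeq ω]
        have hlx : (fun m : Fin (i+1) => An (↑m + 1) ω) (Fin.last i) = An (i + 1) ω := by
          simp
        simp only [hgx, hlx]
        refine Prod.ext ?_ ?_
        · simp [hwrec i ω]
        · funext j
          simp only [Yd, Finset.sum_range_succ, hwrec i ω]

lemma indep_tuple {Ω : Type*} [MeasurableSpace Ω] (P : Measure Ω)
    (An : ℕ → Ω → Fin K → Fin K → ℝ) (hmeas : ∀ n, Measurable (An n))
    (hiid : iIndepFun An P) (i : ℕ) :
    IndepFun (fun ω => (fun m : Fin i => An (m + 1) ω)) (An (i + 1)) P := by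
  classical
  set S : Finset ℕ := Finset.image (fun m => m + 1) (Finset.range i) with hS
  set T : Finset ℕ := {i + 1} with hT
  have hdisj : Disjoint S T := by
    rw [Finset.disjoint_right]
    intro a haT haS
    rw [hT, Finset.mem_singleton] at haT
    rw [hS, Finset.mem_image] at haS
    obtain ⟨m, hm, hma⟩ := haS
    rw [Finset.mem_range] at hm
    omega
  have h := hiid.indepFun_finset S T hdisj hmeas
  have hmem : ∀ m : Fin i, ((m : ℕ) + 1) ∈ S := by
    intro m
    rw [hS, Finset.mem_image]
    exact ⟨m, Finset.mem_range.2 m.isLt, rfl⟩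
  have hmemT : (i + 1) ∈ T := Finset.mem_singleton_self _
  set φ : ((S : Finset ℕ) → Ω → Fin K → Fin K → ℝ) → Unit := fun _ => () with _h
  have hφ : Measurable (fun t : ({ x // x ∈ S } → Fin K → Fin K → ℝ) =>
      (fun m : Fin i => t ⟨(m : ℕ) + 1, hmem m⟩)) :=
    measurable_pi_lambda _ fun m => measurable_pi_apply _
  have hψ : Measurable (fun t : ({ x // x ∈ T } → Fin K → Fin K → ℝ) => t ⟨i + 1, hmemT⟩) :=
    measurable_pi_apply _
  exact h.comp hφ hψ

lemma orth_term {Ω : Type*} [MeasurableSpace Ω] (P : Measure Ω) [IsProbabilityMeasure P]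
    (α : ℝ) (A : Fin K → Fin K → ℝ)
    (An : ℕ → Ω → Fin K → Fin K → ℝ) (hmeas : ∀ n, Measurable (An n))
    (hiid : iIndepFun An P)
    (hval01 : ∀ n ω l k, 0 ≤ An n ω l k ∧ An n ω l k ≤ 1)
    (hmean : ∀ n l k, ∫ ω, An n ω l k ∂P = A l k)
    (w : ℕ → Ω → Fin K → ℝ) (v0 : Fin K → ℝ)
    (hw0 : ∀ ω, w 0 ω = v0)
    (hwrec : ∀ n ω, w (n + 1) ω = upd α (An (n + 1) ω) (w n ω))
    (i : ℕ) (F : ((Fin K → ℝ) × (Fin K → ℝ)) → ℝ) (hF : Measurable F) (j l : Fin K) :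
    ∫ ω, F (w i ω, Yd α A w i ω) * (An (i + 1) ω j l - A j l) ∂P = 0 := by
  obtain ⟨g, hgm, hgeq⟩ := exists_g α A An w v0 hw0 hwrec i
  have hind := indep_tuple P An hmeas hiid i
  have hG : Measurable (fun M : Fin K → Fin K → ℝ => M j l - A j l) :=
    (((measurable_pi_apply l).comp (measurable_pi_apply j) : Measurable fun M : Fin K → Fin K → ℝ => M j l)).sub measurable_const
  have hIF : IndepFun ((F ∘ g) ∘ (fun ω => (fun m : Fin i => An (m + 1) ω)))
      ((fun M : Fin K → Fin K → ℝ => M j l - A j l) ∘ (An (i + 1))) P :=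
    hind.comp (hF.comp hgm) hG
  have heq1 : ((F ∘ g) ∘ (fun ω => (fun m : Fin i => An (m + 1) ω)))
      = fun ω => F (w i ω, Yd α A w i ω) := by
    funext ω
    simp only [Function.comp_apply, hgeq ω]
  have heq2 : ((fun M : Fin K → Fin K → ℝ => M j l - A j l) ∘ (An (i + 1)))
      = fun ω => An (i + 1) ω j l - A j l := rfl
  rw [heq1, heq2] at hIF
  have hFmeas : Measurable (fun ω => F (w i ω, Yd α A w i ω)) := by
    rw [← heq1]
    exact (hF.comp hgm).comp (measurable_pi_lambda _ fun m => hmeas _)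
  have hGmeas : Measurable (fun ω => An (i + 1) ω j l - A j l) :=
    (((measurable_pi_apply l).comp ((measurable_pi_apply j).comp (hmeas (i+1))))).sub
      measurable_const
  have hmul := hIF.integral_mul_eq_mul_integral hFmeas.aestronglyMeasurable hGmeas.aestronglyMeasurable
  have hGzero : ∫ ω, (An (i + 1) ω j l - A j l) ∂P = 0 := by
    have hint : Integrable (fun ω => An (i + 1) ω j l) P := by
      refine Integrable.mono' (integrable_const 1)
        (((measurable_pi_apply l).comp ((measurable_pi_apply j).comp
          (hmeas (i+1))))).aestronglyMeasurable (ae_of_all _ fun ω => ?_)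
      rw [Real.norm_eq_abs, abs_of_nonneg (hval01 (i+1) ω j l).1]
      exact (hval01 (i+1) ω j l).2
    rw [integral_sub hint (integrable_const _), hmean (i+1) j l, integral_const]
    simp
  calc ∫ ω, F (w i ω, Yd α A w i ω) * (An (i + 1) ω j l - A j l) ∂P
      = ∫ ω, ((fun ω => F (w i ω, Yd α A w i ω)) * (fun ω => An (i + 1) ω j l - A j l)) ω ∂P := rfl
    _ = (∫ ω, F (w i ω, Yd α A w i ω) ∂P) * ∫ ω, (An (i + 1) ω j l - A j l) ∂P := hmul
    _ = 0 := by rw [hGzero, mul_zero]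

lemma ae_tendsto_Y {Ω : Type*} [MeasurableSpace Ω] (P : Measure Ω) [IsProbabilityMeasure P]
    (α : ℝ) (hα0 : 0 ≤ α) (hα1 : α < 1) (A : Fin K → Fin K → ℝ) (hA : LeftStochastic A)
    (An : ℕ → Ω → Fin K → Fin K → ℝ) (hmeas : ∀ n, Measurable (An n))
    (hval : ∀ n ω, LeftStochastic (An n ω))
    (hiid : iIndepFun An P)
    (hmean : ∀ n l k, ∫ ω, An n ω l k ∂P = A l k)
    (w : ℕ → Ω → Fin K → ℝ) (v0 : Fin K → ℝ) (hv00 : ∀ j, 0 ≤ v0 j) (hv01 : ∑ j, v0 j = 1)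
    (hw0 : ∀ ω, w 0 ω = v0)
    (hwrec : ∀ n ω, w (n + 1) ω = upd α (An (n + 1) ω) (w n ω)) (j : Fin K) :
    ∀ᵐ ω ∂P, Tendsto (fun i : ℕ => (i : ℝ)⁻¹ * Yd α A w i ω j) atTop (𝓝 0) := by
  have hone : (0:ℝ) ≤ 1 - α := by linarith
  -- entries of An and A are in [0,1]
  have hval01 : ∀ n ω l k, 0 ≤ An n ω l k ∧ An n ω l k ≤ 1 := by
    intro n ω l k
    refine ⟨(hval n ω).1 l k, ?_⟩
    calc An n ω l k ≤ ∑ l', An n ω l' k :=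
          Finset.single_le_sum (fun l' _ => (hval n ω).1 l' k) (Finset.mem_univ l)
      _ = 1 := (hval n ω).2 k
  have hA01 : ∀ l k, 0 ≤ A l k ∧ A l k ≤ 1 := by
    intro l k
    refine ⟨hA.1 l k, ?_⟩
    calc A l k ≤ ∑ l', A l' k :=
          Finset.single_le_sum (fun l' _ => hA.1 l' k) (Finset.mem_univ l)
      _ = 1 := hA.2 k
  -- w is a probability vector
  have hwS : ∀ i ω, (∀ j', 0 ≤ w i ω j') ∧ ∑ j', w i ω j' = 1 := by
    intro i
    induction i with
    | zero => intro ω; rw [hw0 ω]; exact ⟨hv00, hv01⟩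
    | succ i ih =>
        intro ω
        rw [hwrec i ω]
        exact upd_simplex hα0 hα1 (hval (i+1) ω) (ih ω).1 (ih ω).2
  have hwub : ∀ i ω j', w i ω j' ≤ 1 := by
    intro i ω j'
    calc w i ω j' ≤ ∑ j'', w i ω j'' :=
      Finset.single_le_sum (fun j'' _ => (hwS i ω).1 j'') (Finset.mem_univ j')
      _ = 1 := (hwS i ω).2
  -- matrix-vector products stay in [0,1]
  have hMv : ∀ (M : Fin K → Fin K → ℝ), (∀ l k, 0 ≤ M l k ∧ M l k ≤ 1) →
      ∀ i ω, 0 ≤ (∑ l, M j l * w i ω l) ∧ (∑ l, M j l * w i ω l) ≤ 1 := by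
    intro M hM i ω
    constructor
    · exact Finset.sum_nonneg fun l _ => mul_nonneg (hM j l).1 ((hwS i ω).1 l)
    · calc ∑ l, M j l * w i ω l ≤ ∑ l, w i ω l := by
            refine Finset.sum_le_sum fun l _ => ?_
            exact mul_le_of_le_one_left ((hwS i ω).1 l) (hM j l).2
        _ = 1 := (hwS i ω).2
  -- the martingale differences
  set X : ℕ → Ω → ℝ := fun n ω => w (n+1) ω j - upd α A (w n ω) j with hX_def
  have hYX : ∀ i ω, Yd α A w i ω j = ∑ n ∈ Finset.range i, X n ω := fun i ω => rfl
  have hXbound : ∀ n ω, |X n ω| ≤ 1 := by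
    intro n ω
    have h1 := hMv (An (n+1) ω) (fun l k => hval01 (n+1) ω l k) n ω
    have h2 := hMv A hA01 n ω
    have : X n ω = (1 - α) * ((∑ l, An (n+1) ω j l * w n ω l) - ∑ l, A j l * w n ω l) := by
      rw [hX_def]
      simp only [hwrec n ω, upd]
      ring
    rw [this, abs_mul, abs_of_nonneg hone]
    have habs : |(∑ l, An (n+1) ω j l * w n ω l) - ∑ l, A j l * w n ω l| ≤ 1 := by
      rw [abs_le]
      constructor <;> [linarith [h1.1, h2.2]; linarith [h1.2, h2.1]]
    nlinarith
  have hYbound : ∀ i ω, |Yd α A w i ω j| ≤ i := by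
    intro i ω
    rw [hYX i ω]
    calc |∑ n ∈ Finset.range i, X n ω| ≤ ∑ n ∈ Finset.range i, |X n ω| :=
          Finset.abs_sum_le_sum_abs _ _
      _ ≤ ∑ _n ∈ Finset.range i, (1:ℝ) := Finset.sum_le_sum fun n _ => hXbound n ω
      _ = i := by simp
  -- measurability
  obtain ⟨gs, hgs⟩ : ∃ gs : ∀ i : ℕ, (Fin i → (Fin K → Fin K → ℝ)) → ((Fin K → ℝ) × (Fin K → ℝ)),
      ∀ i, Measurable (gs i) ∧ ∀ ω, gs i (fun m => An (m + 1) ω) = (w i ω, Yd α A w i ω) := by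
    choose gs h1 h2 using exists_g α A An w v0 hw0 hwrec
    exact ⟨gs, fun i => ⟨h1 i, h2 i⟩⟩
  have hpair : ∀ i, Measurable (fun ω => (w i ω, Yd α A w i ω)) := by
    intro i
    have : (fun ω => (w i ω, Yd α A w i ω))
        = (gs i) ∘ (fun ω => (fun m : Fin i => An (m + 1) ω)) := by
      funext ω; exact ((hgs i).2 ω).symm
    rw [this]
    exact (hgs i).1.comp (measurable_pi_lambda _ fun m => hmeas _)
  have hwmeas : ∀ i l, Measurable (fun ω => w i ω l) :=
    fun i l => (measurable_pi_apply l).comp (measurable_fst.comp (hpair i))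
  have hYmeas : ∀ i, Measurable (fun ω => Yd α A w i ω j) :=
    fun i => (measurable_pi_apply j).comp (measurable_snd.comp (hpair i))
  have hXmeas : ∀ n, Measurable (X n) := by
    intro n
    refine (hwmeas (n+1) j).sub ?_
    have : (fun ω => upd α A (w n ω) j)
        = fun ω => α * w n ω j + (1 - α) * ∑ l, A j l * w n ω l := rfl
    rw [this]
    exact ((hwmeas n j).const_mul α).add
      ((Finset.measurable_sum _ fun l _ => (hwmeas n l).const_mul (A j l)).const_mul (1 - α))
  -- integrability from boundedness
  have hIB : ∀ (f : Ω → ℝ) (C : ℝ), Measurable f → (∀ ω, |f ω| ≤ C) → Integrable f P :=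
    fun f C hm hb => Integrable.mono' (integrable_const C) hm.aestronglyMeasurable
      (ae_of_all _ fun ω => by rw [Real.norm_eq_abs]; exact hb ω)
  -- orthogonality of martingale differences against the past
  have horth : ∀ (i p : ℕ), ∫ ω, (Yd α A w i ω j) ^ p * X i ω ∂P = 0 := by
    intro i p
    have hXform : ∀ ω, X i ω
        = ∑ l, (((1 - α) * w i ω l) * (An (i+1) ω j l - A j l)) := by
      intro ω
      have h : ∑ l, (((1 - α) * w i ω l) * (An (i+1) ω j l - A j l))
          = (1-α) * ∑ l, An (i+1) ω j l * w i ω l - (1-α) * ∑ l, A j l * w i ω l := by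
        rw [Finset.mul_sum, Finset.mul_sum, ← Finset.sum_sub_distrib]
        exact Finset.sum_congr rfl fun l _ => by ring
      rw [hX_def]
      simp only [hwrec i ω, upd]
      rw [h]
      ring
    have hptw : ∀ ω, (Yd α A w i ω j) ^ p * X i ω
        = ∑ l, ((Yd α A w i ω j) ^ p * ((1 - α) * w i ω l)) * (An (i+1) ω j l - A j l) := by
      intro ω
      rw [hXform ω, Finset.mul_sum]
      exact Finset.sum_congr rfl fun l _ => by ring
    have hterm_bound : ∀ (l : Fin K) ω,
        |((Yd α A w i ω j) ^ p * ((1 - α) * w i ω l)) * (An (i+1) ω j l - A j l)| ≤ (i:ℝ)^p := by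
      intro l ω
      have h1 : |Yd α A w i ω j ^ p| ≤ (i:ℝ)^p := by
        rw [abs_pow]; exact pow_le_pow_left₀ (abs_nonneg _) (hYbound i ω) p
      have h2 : |(1-α) * w i ω l| ≤ 1 := by
        rw [abs_mul, abs_of_nonneg hone, abs_of_nonneg ((hwS i ω).1 l)]
        nlinarith [hwub i ω l, (hwS i ω).1 l]
      have h3 : |An (i+1) ω j l - A j l| ≤ 1 := by
        rw [abs_le]
        constructor <;>
          [linarith [(hval01 (i+1) ω j l).1, (hA01 j l).2];
           linarith [(hval01 (i+1) ω j l).2, (hA01 j l).1]]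
      rw [abs_mul, abs_mul]
      calc |Yd α A w i ω j ^ p| * |(1-α) * w i ω l| * |An (i+1) ω j l - A j l|
          ≤ (i:ℝ)^p * 1 * 1 := by
            refine mul_le_mul (mul_le_mul h1 h2 (abs_nonneg _)
              (le_trans (abs_nonneg _) h1)) h3 (abs_nonneg _) (by positivity)
        _ = (i:ℝ)^p := by ring
    have hterm_meas : ∀ l : Fin K, Measurable (fun ω =>
        ((Yd α A w i ω j) ^ p * ((1 - α) * w i ω l)) * (An (i+1) ω j l - A j l)) := by
      intro l
      exact (((hYmeas i).pow_const p).mul ((hwmeas i l).const_mul (1-α))).mul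
        ((((measurable_pi_apply l).comp ((measurable_pi_apply j).comp (hmeas (i+1))))).sub
          measurable_const)
    have : ∫ ω, (Yd α A w i ω j) ^ p * X i ω ∂P
        = ∑ l, ∫ ω, ((Yd α A w i ω j) ^ p * ((1 - α) * w i ω l))
            * (An (i+1) ω j l - A j l) ∂P := by
      rw [← integral_finset_sum _ (fun l _ => hIB _ ((i:ℝ)^p) (hterm_meas l) (hterm_bound l))]
      exact integral_congr_ae (ae_of_all _ hptw)
    rw [this]
    refine Finset.sum_eq_zero fun l _ => ?_
    exact orth_term P α A An hmeas hiid hval01 hmean w v0 hw0 hwrec i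
      (fun q => (q.2 j) ^ p * ((1 - α) * q.1 l))
      ((((measurable_pi_apply j).comp measurable_snd).pow_const p).mul
        (((measurable_pi_apply l).comp measurable_fst : Measurable fun q : ((Fin K → ℝ) × (Fin K → ℝ)) => q.1 l).const_mul (1-α))) j l
  -- second and fourth moments
  have hYrec : ∀ i ω, Yd α A w (i+1) ω j = Yd α A w i ω j + X i ω := by
    intro i ω
    rw [hYX, hYX, Finset.sum_range_succ]
  have hY0 : ∀ ω, Yd α A w 0 ω j = 0 := fun ω => by simp [Yd]
  have hIY : ∀ (i q : ℕ), Integrable (fun ω => (Yd α A w i ω j)^q) P := by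
    intro i q
    refine hIB _ ((i:ℝ)^q) ((hYmeas i).pow_const q) (fun ω => ?_)
    rw [abs_pow]; exact pow_le_pow_left₀ (abs_nonneg _) (hYbound i ω) q
  have hprod_bound : ∀ (i a b : ℕ) (ω), |(Yd α A w i ω j)^a * (X i ω)^b| ≤ (i:ℝ)^a := by
    intro i a b ω
    rw [abs_mul, abs_pow, abs_pow]
    calc |Yd α A w i ω j|^a * |X i ω|^b ≤ (i:ℝ)^a * 1 := by
          refine mul_le_mul (pow_le_pow_left₀ (abs_nonneg _) (hYbound i ω) a)
            (pow_le_one₀ (abs_nonneg _) (hXbound i ω)) (by positivity) (by positivity)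
      _ = (i:ℝ)^a := mul_one _
  have hIYX : ∀ (i a b : ℕ), Integrable (fun ω => (Yd α A w i ω j)^a * (X i ω)^b) P :=
    fun i a b => hIB _ ((i:ℝ)^a) (((hYmeas i).pow_const a).mul ((hXmeas i).pow_const b))
      (hprod_bound i a b)
  have hIX : ∀ (i b : ℕ), Integrable (fun ω => (X i ω)^b) P := by
    intro i b
    refine hIB _ 1 ((hXmeas i).pow_const b) (fun ω => ?_)
    rw [abs_pow]; exact pow_le_one₀ (abs_nonneg _) (hXbound i ω)
  have hIXint : ∀ (i b : ℕ), ∫ ω, (X i ω)^b ∂P ≤ 1 := by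
    intro i b
    calc ∫ ω, (X i ω)^b ∂P ≤ ∫ _ω, (1:ℝ) ∂P := by
          refine integral_mono (hIX i b) (integrable_const 1) fun ω => ?_
          calc (X i ω)^b ≤ |(X i ω)^b| := le_abs_self _
            _ ≤ 1 := by rw [abs_pow]; exact pow_le_one₀ (abs_nonneg _) (hXbound i ω)
      _ = 1 := by simp
  have horth' : ∀ (i p : ℕ), ∫ ω, (Yd α A w i ω j) ^ p * (X i ω)^1 ∂P = 0 := by
    intro i p
    simpa using horth i p
  have h2m : ∀ i : ℕ, ∫ ω, (Yd α A w i ω j)^2 ∂P ≤ (i:ℝ) := by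
    intro i
    induction i with
    | zero =>
        have : (fun ω => (Yd α A w 0 ω j)^2) = fun _ => 0 := funext fun ω => by
          rw [hY0 ω]; ring
        rw [this, integral_zero]
        simp
    | succ i ih =>
        have hsplit : (fun ω => (Yd α A w (i+1) ω j)^2)
            = fun ω => (Yd α A w i ω j)^2
              + (2 * ((Yd α A w i ω j)^1 * (X i ω)^1) + (X i ω)^2) := funext fun ω => by
          rw [hYrec i ω]; ring
        have hI11 : Integrable (fun ω => 2 * (Yd α A w i ω j ^ 1 * X i ω ^ 1)) P :=
          (hIYX i 1 1).const_mul 2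
        have hI2 : Integrable (fun ω => X i ω ^ 2) P := hIX i 2
        have hI23 : Integrable (fun ω =>
            2 * (Yd α A w i ω j ^ 1 * X i ω ^ 1) + X i ω ^ 2) P := hI11.add hI2
        have e1 : ∫ ω, (Yd α A w i ω j ^ 2
              + (2 * (Yd α A w i ω j ^ 1 * X i ω ^ 1) + X i ω ^ 2)) ∂P
            = (∫ ω, Yd α A w i ω j ^ 2 ∂P)
              + ∫ ω, (2 * (Yd α A w i ω j ^ 1 * X i ω ^ 1) + X i ω ^ 2) ∂P :=
          integral_add (hIY i 2) hI23
        have e2 : ∫ ω, (2 * (Yd α A w i ω j ^ 1 * X i ω ^ 1) + X i ω ^ 2) ∂P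
            = (∫ ω, 2 * (Yd α A w i ω j ^ 1 * X i ω ^ 1) ∂P) + ∫ ω, X i ω ^ 2 ∂P :=
          integral_add hI11 hI2
        have e3 : ∫ ω, 2 * (Yd α A w i ω j ^ 1 * X i ω ^ 1) ∂P
            = 2 * ∫ ω, Yd α A w i ω j ^ 1 * X i ω ^ 1 ∂P := integral_const_mul 2 _
        rw [hsplit, e1, e2, e3, horth' i 1]
        push_cast
        linarith [hIXint i 2]
  have h4m : ∀ i : ℕ, ∫ ω, (Yd α A w i ω j)^4 ∂P ≤ 6 * (i:ℝ)^2 := by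
    intro i
    induction i with
    | zero =>
        have : (fun ω => (Yd α A w 0 ω j)^4) = fun _ => 0 := funext fun ω => by
          rw [hY0 ω]; ring
        rw [this, integral_zero]
        simp
    | succ i ih =>
        have hsplit : (fun ω => (Yd α A w (i+1) ω j)^4)
            = fun ω => (Yd α A w i ω j)^4
              + (4 * ((Yd α A w i ω j)^3 * (X i ω)^1)
              + (6 * ((Yd α A w i ω j)^2 * (X i ω)^2)
              + (4 * ((Yd α A w i ω j)^1 * (X i ω)^3) + (X i ω)^4))) := funext fun ω => by
          rw [hYrec i ω]; ring
        have hI31 : Integrable (fun ω => 4 * (Yd α A w i ω j ^ 3 * X i ω ^ 1)) P :=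
          (hIYX i 3 1).const_mul 4
        have hI22 : Integrable (fun ω => 6 * (Yd α A w i ω j ^ 2 * X i ω ^ 2)) P :=
          (hIYX i 2 2).const_mul 6
        have hI13 : Integrable (fun ω => 4 * (Yd α A w i ω j ^ 1 * X i ω ^ 3)) P :=
          (hIYX i 1 3).const_mul 4
        have hI4 : Integrable (fun ω => X i ω ^ 4) P := hIX i 4
        have hI134 : Integrable (fun ω =>
            4 * (Yd α A w i ω j ^ 1 * X i ω ^ 3) + X i ω ^ 4) P := hI13.add hI4
        have hI2234 : Integrable (fun ω => 6 * (Yd α A w i ω j ^ 2 * X i ω ^ 2)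
            + (4 * (Yd α A w i ω j ^ 1 * X i ω ^ 3) + X i ω ^ 4)) P := hI22.add hI134
        have hIrest : Integrable (fun ω => 4 * (Yd α A w i ω j ^ 3 * X i ω ^ 1)
            + (6 * (Yd α A w i ω j ^ 2 * X i ω ^ 2)
            + (4 * (Yd α A w i ω j ^ 1 * X i ω ^ 3) + X i ω ^ 4))) P := hI31.add hI2234
        have e1 : ∫ ω, (Yd α A w i ω j ^ 4 + (4 * (Yd α A w i ω j ^ 3 * X i ω ^ 1)
              + (6 * (Yd α A w i ω j ^ 2 * X i ω ^ 2)
              + (4 * (Yd α A w i ω j ^ 1 * X i ω ^ 3) + X i ω ^ 4)))) ∂P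
            = (∫ ω, Yd α A w i ω j ^ 4 ∂P) + ∫ ω, (4 * (Yd α A w i ω j ^ 3 * X i ω ^ 1)
              + (6 * (Yd α A w i ω j ^ 2 * X i ω ^ 2)
              + (4 * (Yd α A w i ω j ^ 1 * X i ω ^ 3) + X i ω ^ 4))) ∂P :=
          integral_add (hIY i 4) hIrest
        have e2 : ∫ ω, (4 * (Yd α A w i ω j ^ 3 * X i ω ^ 1)
              + (6 * (Yd α A w i ω j ^ 2 * X i ω ^ 2)
              + (4 * (Yd α A w i ω j ^ 1 * X i ω ^ 3) + X i ω ^ 4))) ∂P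
            = (∫ ω, 4 * (Yd α A w i ω j ^ 3 * X i ω ^ 1) ∂P)
              + ∫ ω, (6 * (Yd α A w i ω j ^ 2 * X i ω ^ 2)
              + (4 * (Yd α A w i ω j ^ 1 * X i ω ^ 3) + X i ω ^ 4)) ∂P :=
          integral_add hI31 hI2234
        have e3 : ∫ ω, (6 * (Yd α A w i ω j ^ 2 * X i ω ^ 2)
              + (4 * (Yd α A w i ω j ^ 1 * X i ω ^ 3) + X i ω ^ 4)) ∂P
            = (∫ ω, 6 * (Yd α A w i ω j ^ 2 * X i ω ^ 2) ∂P)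
              + ∫ ω, (4 * (Yd α A w i ω j ^ 1 * X i ω ^ 3) + X i ω ^ 4) ∂P :=
          integral_add hI22 hI134
        have e4 : ∫ ω, (4 * (Yd α A w i ω j ^ 1 * X i ω ^ 3) + X i ω ^ 4) ∂P
            = (∫ ω, 4 * (Yd α A w i ω j ^ 1 * X i ω ^ 3) ∂P) + ∫ ω, X i ω ^ 4 ∂P :=
          integral_add hI13 hI4
        have e5 : ∫ ω, 4 * (Yd α A w i ω j ^ 3 * X i ω ^ 1) ∂P
            = 4 * ∫ ω, Yd α A w i ω j ^ 3 * X i ω ^ 1 ∂P := integral_const_mul 4 _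
        have e6 : ∫ ω, 6 * (Yd α A w i ω j ^ 2 * X i ω ^ 2) ∂P
            = 6 * ∫ ω, Yd α A w i ω j ^ 2 * X i ω ^ 2 ∂P := integral_const_mul 6 _
        have e7 : ∫ ω, 4 * (Yd α A w i ω j ^ 1 * X i ω ^ 3) ∂P
            = 4 * ∫ ω, Yd α A w i ω j ^ 1 * X i ω ^ 3 ∂P := integral_const_mul 4 _
        rw [hsplit, e1, e2, e3, e4, e5, e6, e7, horth' i 3]
        have h22 : ∫ ω, (Yd α A w i ω j)^2 * (X i ω)^2 ∂P ≤ (i:ℝ) := by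
          calc ∫ ω, (Yd α A w i ω j)^2 * (X i ω)^2 ∂P ≤ ∫ ω, (Yd α A w i ω j)^2 ∂P := by
                refine integral_mono (hIYX i 2 2) (hIY i 2) fun ω => ?_
                have hX2 : X i ω ^ 2 ≤ 1 := by nlinarith [abs_le.mp (hXbound i ω)]
                nlinarith [mul_nonneg (sq_nonneg (Yd α A w i ω j)) (sub_nonneg.2 hX2)]
            _ ≤ (i:ℝ) := h2m i
        have h13 : ∫ ω, (Yd α A w i ω j)^1 * (X i ω)^3 ∂P ≤ (i:ℝ) := by
          calc ∫ ω, (Yd α A w i ω j)^1 * (X i ω)^3 ∂P ≤ ∫ _ω, (i:ℝ) ∂P := by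
                refine integral_mono (hIYX i 1 3) (integrable_const _) fun ω => ?_
                calc (Yd α A w i ω j)^1 * (X i ω)^3
                    ≤ |(Yd α A w i ω j)^1 * (X i ω)^3| := le_abs_self _
                  _ ≤ (i:ℝ)^1 := hprod_bound i 1 3 ω
                  _ = (i:ℝ) := pow_one _
            _ = (i:ℝ) := by simp
        push_cast
        nlinarith [hIXint i 4]
  -- summation of fourth moments
  set u : ℕ → Ω → ℝ := fun i ω => (i:ℝ)⁻¹ * Yd α A w i ω j with hu_def
  have humeas : ∀ i, Measurable (u i) := fun i => (hYmeas i).const_mul _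
  have hub : ∀ (i : ℕ) ω, |u i ω| ≤ 1 := by
    intro i ω
    rcases Nat.eq_zero_or_pos i with h0 | hp
    · subst h0
      simp [hu_def]
    · have hipos : (0:ℝ) < i := by exact_mod_cast hp
      rw [hu_def]
      simp only
      rw [abs_mul, abs_inv, Nat.abs_cast]
      calc (i:ℝ)⁻¹ * |Yd α A w i ω j| ≤ (i:ℝ)⁻¹ * (i:ℝ) :=
            mul_le_mul_of_nonneg_left (hYbound i ω) (inv_nonneg.2 hipos.le)
        _ = 1 := inv_mul_cancel₀ hipos.ne'
  have hfint : ∀ i, Integrable (fun ω => (u i ω)^4) P := by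
    intro i
    refine hIB _ 1 ((humeas i).pow_const 4) fun ω => ?_
    rw [abs_pow]; exact pow_le_one₀ (abs_nonneg _) (hub i ω)
  have hfb : ∀ i : ℕ, ∫ ω, (u i ω)^4 ∂P ≤ 6 * ((i:ℝ)^2)⁻¹ := by
    intro i
    rcases Nat.eq_zero_or_pos i with h0 | hp
    · subst h0
      have : (fun ω => (u 0 ω)^4) = fun _ => 0 := funext fun ω => by simp [hu_def]
      rw [this, integral_zero]
      simp
    · have hipos : (0:ℝ) < i := by exact_mod_cast hp
      have hrw : (fun ω => (u i ω)^4) = fun ω => ((i:ℝ)⁻¹)^4 * (Yd α A w i ω j)^4 :=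
        funext fun ω => by rw [hu_def]; ring
      rw [hrw, integral_const_mul]
      calc ((i:ℝ)⁻¹)^4 * ∫ ω, (Yd α A w i ω j)^4 ∂P ≤ ((i:ℝ)⁻¹)^4 * (6 * (i:ℝ)^2) :=
            mul_le_mul_of_nonneg_left (h4m i) (by positivity)
        _ = 6 * ((i:ℝ)^2)⁻¹ := by field_simp
  set F : ℕ → Ω → ℝ≥0∞ := fun i ω => ENNReal.ofReal ((u i ω)^4) with hF_def
  have hFmeas : ∀ i, Measurable (F i) := fun i => ((humeas i).pow_const 4).ennreal_ofReal
  have hsummable : Summable (fun i : ℕ => 6 * ((i:ℝ)^2)⁻¹) := by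
    have h := (Real.summable_one_div_nat_pow (p := 2)).2 (by norm_num)
    have h2 := h.mul_left 6
    simpa [one_div] using h2
  have htsum : ∑' i, ∫⁻ ω, F i ω ∂P ≠ ⊤ := by
    have hle : ∑' i, ∫⁻ ω, F i ω ∂P ≤ ∑' i : ℕ, ENNReal.ofReal (6 * ((i:ℝ)^2)⁻¹) := by
      refine ENNReal.tsum_le_tsum fun i => ?_
      rw [hF_def, ← ofReal_integral_eq_lintegral_ofReal (hfint i)
        (ae_of_all _ fun ω => by positivity)]
      exact ENNReal.ofReal_le_ofReal (hfb i)
    rw [← ENNReal.ofReal_tsum_of_nonneg (fun i => by positivity) hsummable] at hle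
    exact ne_top_of_le_ne_top ENNReal.ofReal_ne_top hle
  have hlint : ∫⁻ ω, ∑' i, F i ω ∂P ≠ ⊤ := by
    rw [lintegral_tsum fun i => (hFmeas i).aemeasurable]
    exact htsum
  have haelt : ∀ᵐ ω ∂P, ∑' i, F i ω < ⊤ := ae_lt_top (Measurable.ennreal_tsum hFmeas) hlint
  filter_upwards [haelt] with ω hω
  have hF0 : Tendsto (fun i => F i ω) atTop (𝓝 0) :=
    ENNReal.tendsto_atTop_zero_of_tsum_ne_top hω.ne
  have hf0 : Tendsto (fun i => (u i ω)^4) atTop (𝓝 0) := by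
    have h1 : Tendsto (fun i => (F i ω).toReal) atTop (𝓝 (0:ℝ≥0∞).toReal) :=
      (ENNReal.tendsto_toReal (by simp)).comp hF0
    have h2 : ∀ i, (F i ω).toReal = (u i ω)^4 := fun i =>
      ENNReal.toReal_ofReal (by positivity)
    simpa [h2] using h1
  have habs : Tendsto (fun i => |u i ω|) atTop (𝓝 0) := by
    have h1 : ∀ i, |u i ω| = ((u i ω)^4) ^ (((4:ℕ):ℝ)⁻¹) := by
      intro i
      have h2 : (u i ω)^4 = |u i ω|^4 := by
        rw [pow_abs, abs_of_nonneg (by positivity)]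
      rw [h2, Real.pow_rpow_inv_natCast (abs_nonneg _) (by norm_num)]
    have h2 : Tendsto (fun x : ℝ => x ^ (((4:ℕ):ℝ)⁻¹)) (𝓝 0)
        (𝓝 ((0:ℝ) ^ (((4:ℕ):ℝ)⁻¹))) :=
      (Real.continuousAt_rpow_const 0 _ (Or.inr (by norm_num))).tendsto
    rw [Real.zero_rpow (by norm_num)] at h2
    have h3 : Tendsto (fun i => ((u i ω)^4) ^ (((4:ℕ):ℝ)⁻¹)) atTop (𝓝 0) := h2.comp hf0
    have h4 : (fun i : ℕ => ((u i ω)^4) ^ (((4:ℕ):ℝ)⁻¹)) = (fun i => |u i ω|) :=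
      funext fun i => (h1 i).symm
    rw [h4] at h3
    exact h3
  have hneg : Tendsto (fun i => -|u i ω|) atTop (𝓝 0) := by simpa using habs.neg
  exact tendsto_of_tendsto_of_tendsto_of_le_of_le hneg habs
    (fun i => neg_abs_le _) (fun i => le_abs_self _)

lemma upd_smul (α c : ℝ) (M : Fin K → Fin K → ℝ) (v : Fin K → ℝ) (j : Fin K) :
    upd α M (fun l => c * v l) j = c * upd α M v j := by
  simp only [upd]
  have h : ∑ l, M j l * (c * v l) = c * ∑ l, M j l * v l := by
    rw [Finset.mul_sum]
    exact Finset.sum_congr rfl fun l _ => by ring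
  rw [h]
  ring

/-- with i.i.d. random left-stochastic 0/1 matrices `A_n` of mean `A`
(left-stochastic, strongly connected, Perron vector `π`), the Cesàro averages of the random
probability vectors `w_0 = e_k`, `w_n = (αI + (1-α)A_n) w_{n-1}` converge a.s. to `π`. -/
theorem statement0 [NeZero K]
    {Ω : Type*} [MeasurableSpace Ω] (P : Measure Ω) [IsProbabilityMeasure P]
    (A : Fin K → Fin K → ℝ) (hA : LeftStochastic A) (hAsc : StronglyConnected A)
    (π : Fin K → ℝ) (hπpos : ∀ j, 0 < π j) (hπsum : ∑ j, π j = 1)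
    (hπfix : ∀ j, ∑ l, A j l * π l = π j)
    (An : ℕ → Ω → Fin K → Fin K → ℝ) (hmeas : ∀ n, Measurable (An n))
    (hval : ∀ n ω, LeftStochastic (An n ω) ∧ ZeroOne (An n ω))
    (hiid : iIndepFun An P)
    (hid : ∀ n, IdentDistrib (An n) (An 1) P P)
    (hmean : ∀ n l k, ∫ ω, An n ω l k ∂P = A l k)
    (α : ℝ) (hα0 : 0 ≤ α) (hα1 : α < 1) (k : Fin K)
    (w : ℕ → Ω → Fin K → ℝ)
    (hw0 : ∀ ω, w 0 ω = fun j => if j = k then (1 : ℝ) else 0)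
    (hwrec : ∀ n ω, w (n + 1) ω = upd α (An (n + 1) ω) (w n ω)) :
    ∀ᵐ ω ∂P, Tendsto (fun i : ℕ => (i : ℝ)⁻¹ • ∑ n ∈ Finset.Icc 1 i, w n ω)
      atTop (𝓝 π) := by

  have hvalLS : ∀ n ω, LeftStochastic (An n ω) := fun n ω => (hval n ω).1
  set v0 : Fin K → ℝ := fun j => if j = k then (1:ℝ) else 0 with hv0_def
  have hv00 : ∀ j, 0 ≤ v0 j := fun j => by
    by_cases h : j = k <;> simp [hv0_def, h]
  have hv01 : ∑ j, v0 j = 1 := by simp [hv0_def]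
  have hgood : ∀ᵐ ω ∂P, ∀ j, Tendsto (fun i : ℕ => (i:ℝ)⁻¹ * Yd α A w i ω j)
      atTop (𝓝 0) := by
    rw [ae_all_iff]
    intro j
    exact ae_tendsto_Y P α hα0 hα1 A hA An hmeas hvalLS hiid hmean w v0 hv00 hv01 hw0 hwrec j
  have hwS : ∀ i ω, (∀ j', 0 ≤ w i ω j') ∧ ∑ j', w i ω j' = 1 := by
    intro i
    induction i with
    | zero => intro ω; rw [hw0 ω]; exact ⟨hv00, hv01⟩
    | succ i ih =>
        intro ω
        rw [hwrec i ω]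
        exact upd_simplex hα0 hα1 (hvalLS (i+1) ω) (ih ω).1 (ih ω).2
  filter_upwards [hgood] with ω hω
  set Sf : ℕ → Fin K → ℝ := fun i j => ∑ n ∈ Finset.range i, w (n+1) ω j with hSf_def
  have hid' : ∀ i j, Sf i j - upd α A (Sf i) j
      = upd α A (w 0 ω) j - upd α A (w i ω) j + Yd α A w i ω j := by
    intro i
    induction i with
    | zero =>
        intro j
        have h1 : Sf 0 = fun _ => 0 := funext fun j' => by simp [hSf_def]
        have h2 : upd α A (fun _ => 0) j = 0 := by simp [upd]
        have h3 : Yd α A w 0 ω j = 0 := by simp [Yd]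
        rw [h1, h2, h3]
        simp [hSf_def]
    | succ i ih =>
        intro j
        have hS1 : ∀ j', Sf (i+1) j' = Sf i j' + w (i+1) ω j' := fun j' =>
          Finset.sum_range_succ _ _
        have hupd : upd α A (Sf (i+1)) j = upd α A (Sf i) j + upd α A (w (i+1) ω) j := by
          have h : Sf (i+1) = fun j' => Sf i j' + w (i+1) ω j' := funext hS1
          rw [h, upd_add]
        have hYd1 : Yd α A w (i+1) ω j
            = Yd α A w i ω j + (w (i+1) ω j - upd α A (w i ω) j) :=
          Finset.sum_range_succ _ _
        rw [hS1 j, hupd, hYd1]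
        linarith [ih j]
  have hB01 : ∀ i j, 0 ≤ upd α A (w i ω) j ∧ upd α A (w i ω) j ≤ 1 := by
    intro i j
    have h := upd_simplex hα0 hα1 hA (hwS i ω).1 (hwS i ω).2
    refine ⟨h.1 j, ?_⟩
    calc upd α A (w i ω) j ≤ ∑ j', upd α A (w i ω) j' :=
          Finset.single_le_sum (fun j' _ => h.1 j') (Finset.mem_univ j)
      _ = 1 := h.2
  set v : ℕ → Fin K → ℝ := fun i j => ((i:ℝ)+1)⁻¹ * Sf (i+1) j with hv_def
  have hipos : ∀ i : ℕ, (0:ℝ) < (i:ℝ) + 1 := fun i => by positivity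
  have hv0' : ∀ i j, 0 ≤ v i j := by
    intro i j
    refine mul_nonneg (inv_nonneg.2 (hipos i).le) ?_
    exact Finset.sum_nonneg fun n _ => (hwS (n+1) ω).1 j
  have hv1' : ∀ i, ∑ j, v i j = 1 := by
    intro i
    have h1 : ∑ j, v i j = ((i:ℝ)+1)⁻¹ * ∑ j, Sf (i+1) j := by
      rw [Finset.mul_sum]
    have h2 : ∑ j, Sf (i+1) j = (i:ℝ)+1 := by
      simp only [hSf_def]
      rw [Finset.sum_comm]
      have h3 : ∀ n ∈ Finset.range (i+1), ∑ j, w (n+1) ω j = 1 :=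
        fun n _ => (hwS (n+1) ω).2
      rw [Finset.sum_congr rfl h3]
      simp
    rw [h1, h2, inv_mul_cancel₀ (hipos i).ne']
  have hvlim : ∀ j, Tendsto (fun i => v i j - upd α A (v i) j) atTop (𝓝 0) := by
    intro j
    have heq : (fun i : ℕ => v i j - upd α A (v i) j)
        = fun i : ℕ => ((i:ℝ)+1)⁻¹ * (upd α A (w 0 ω) j - upd α A (w (i+1) ω) j)
          + ((i:ℝ)+1)⁻¹ * Yd α A w (i+1) ω j := by
      funext i
      have h1 : upd α A (v i) j = ((i:ℝ)+1)⁻¹ * upd α A (Sf (i+1)) j := by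
        have h2 : v i = fun l => ((i:ℝ)+1)⁻¹ * Sf (i+1) l := rfl
        rw [h2, upd_smul]
      have h3 : v i j = ((i:ℝ)+1)⁻¹ * Sf (i+1) j := rfl
      rw [h1, h3, ← mul_sub, hid' (i+1) j]
      ring
    rw [heq]
    have hz : Tendsto (fun i : ℕ => ((i:ℝ)+1)⁻¹) atTop (𝓝 0) := by
      have := tendsto_one_div_add_atTop_nhds_zero_nat (𝕜 := ℝ)
      simpa [one_div] using this
    have t2 : Tendsto (fun i : ℕ => ((i:ℝ)+1)⁻¹ * Yd α A w (i+1) ω j) atTop (𝓝 0) := by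
      have h := (tendsto_add_atTop_iff_nat 1).2 (hω j)
      simp only [Nat.cast_add, Nat.cast_one] at h
      exact h
    have t1 : Tendsto (fun i : ℕ => ((i:ℝ)+1)⁻¹
        * (upd α A (w 0 ω) j - upd α A (w (i+1) ω) j)) atTop (𝓝 0) := by
      have hb : ∀ i : ℕ, |((i:ℝ)+1)⁻¹ * (upd α A (w 0 ω) j - upd α A (w (i+1) ω) j)|
          ≤ 2 * ((i:ℝ)+1)⁻¹ := by
        intro i
        rw [abs_mul, abs_inv]
        rw [abs_of_nonneg (hipos i).le]
        have hd : |upd α A (w 0 ω) j - upd α A (w (i+1) ω) j| ≤ 2 := by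
          rw [abs_le]
          constructor <;> [linarith [(hB01 0 j).1, (hB01 (i+1) j).2];
            linarith [(hB01 0 j).2, (hB01 (i+1) j).1]]
        calc ((i:ℝ)+1)⁻¹ * |upd α A (w 0 ω) j - upd α A (w (i+1) ω) j|
            ≤ ((i:ℝ)+1)⁻¹ * 2 := mul_le_mul_of_nonneg_left hd (inv_nonneg.2 (hipos i).le)
          _ = 2 * ((i:ℝ)+1)⁻¹ := mul_comm _ _
      have h2z : Tendsto (fun i : ℕ => 2 * ((i:ℝ)+1)⁻¹) atTop (𝓝 0) := by
        simpa using hz.const_mul 2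
      have hnz : Tendsto (fun i : ℕ => -(2 * ((i:ℝ)+1)⁻¹)) atTop (𝓝 0) := by
        simpa using h2z.neg
      refine tendsto_of_tendsto_of_tendsto_of_le_of_le hnz h2z
        (fun i => ?_) (fun i => ?_)
      · linarith [(abs_le.mp (hb i)).1]
      · exact (abs_le.mp (hb i)).2
    simpa using t1.add t2
  have hcd := cesaro_det A hA hAsc π hπpos hπsum hπfix α hα0 hα1 v hv0' hv1' hvlim
  refine (tendsto_add_atTop_iff_nat 1).1 (Tendsto.congr (fun i => ?_) hcd)
  funext j
  have h1 : ((↑(i+1) : ℝ)⁻¹ • ∑ n ∈ Finset.Icc 1 (i+1), w n ω) j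
      = ((i:ℝ)+1)⁻¹ * ∑ n ∈ Finset.Icc 1 (i+1), w n ω j := by
    simp [Finset.sum_apply]
  rw [h1, sum_Icc_one (fun n => w n ω j) (i+1)]
end

section
/- Let A be a K×K left-stochastic, strongly connected matrix with Perron vector π, let (A_n)_{n≥1} be i.i.d. random left-stochastic 0/1-valued matrices with E[A_n] = A, fix α ∈ [0,1), ᾱ = 1−α, and define w_0 = e_k, w_n = (αI + ᾱA_n) w_{n−1}. Suppose C > 0 and ρ ∈ (0,1) are such that ‖(αI + ᾱA)^j (w − π)‖ ≤ C ρ^j for every probability vector w and every j ≥ 0, where ‖·‖ is the Euclidean norm. Then for every ε > 0 and every i ≥ 1, P( ‖ (1/i) Σ_{n=1}^{i} w_n − π ‖² > ε ) ≤ (4 + 4Cρ/(1−ρ)) / (ε i). -/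
open MeasureTheory ProbabilityTheory Filter Topology

variable {K : ℕ}

/-- Euclidean norm of a vector in `ℝ^K`. -/
noncomputable def enorm' (v : Fin K → ℝ) : ℝ := Real.sqrt (∑ j, v j ^ 2)

def Wit (α : ℝ) (k : Fin K) (Ms : ℕ → Fin K → Fin K → ℝ) : ℕ → Fin K → ℝ
  | 0 => fun j => if j = k then 1 else 0
  | n+1 => upd α (Ms (n+1)) (Wit α k Ms n)

lemma Wit_congr {α : ℝ} {k : Fin K} {Ms Ms' : ℕ → Fin K → Fin K → ℝ} (n : ℕ)
    (h : ∀ t, 1 ≤ t → t ≤ n → Ms t = Ms' t) : Wit α k Ms n = Wit α k Ms' n := by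
  induction n with
  | zero => rfl
  | succ n ih =>
    show upd α (Ms (n+1)) (Wit α k Ms n) = upd α (Ms' (n+1)) (Wit α k Ms' n)
    rw [ih (fun t h1 h2 => h t h1 (h2.trans (Nat.le_succ n))),
      h (n+1) (Nat.succ_le_succ (Nat.zero_le n)) le_rfl]

lemma Wit_measurable (α : ℝ) (k : Fin K) (n : ℕ) :
    Measurable (fun Ms : ℕ → Fin K → Fin K → ℝ => Wit α k Ms n) := by
  induction n with
  | zero => exact measurable_const
  | succ n ih =>
    show Measurable fun Ms : ℕ → Fin K → Fin K → ℝ => upd α (Ms (n+1)) (Wit α k Ms n)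
    unfold upd
    apply measurable_pi_lambda
    intro j
    apply Measurable.add
    · exact measurable_const.mul ((measurable_pi_apply j).comp ih)
    · apply Measurable.mul measurable_const
      apply Finset.measurable_sum
      intro l _
      exact ((measurable_pi_apply l).comp ((measurable_pi_apply j).comp
        (measurable_pi_apply (n+1)))).mul ((measurable_pi_apply l).comp ih)

/-- Markov-type bound on the deviation of the Cesàro average of the random
probability vectors `w_n` from the Perron vector `π`, given the geometric mixing bound
`‖(αI + (1-α)A)^j (w - π)‖ ≤ C ρ^j` for all probability vectors `w`. -/
theorem statement1 [NeZero K]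
    {Ω : Type*} [MeasurableSpace Ω] (P : Measure Ω) [IsProbabilityMeasure P]
    (A : Fin K → Fin K → ℝ) (hA : LeftStochastic A) (hAsc : StronglyConnected A)
    (π : Fin K → ℝ) (hπpos : ∀ j, 0 < π j) (hπsum : ∑ j, π j = 1)
    (hπfix : ∀ j, ∑ l, A j l * π l = π j)
    (An : ℕ → Ω → Fin K → Fin K → ℝ) (hmeas : ∀ n, Measurable (An n))
    (hval : ∀ n ω, LeftStochastic (An n ω) ∧ ZeroOne (An n ω))
    (hiid : iIndepFun An P)
    (hid : ∀ n, IdentDistrib (An n) (An 1) P P)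
    (hmean : ∀ n l k, ∫ ω, An n ω l k ∂P = A l k)
    (α : ℝ) (hα0 : 0 ≤ α) (hα1 : α < 1) (k : Fin K)
    (w : ℕ → Ω → Fin K → ℝ)
    (hw0 : ∀ ω, w 0 ω = fun j => if j = k then (1 : ℝ) else 0)
    (hwrec : ∀ n ω, w (n + 1) ω = upd α (An (n + 1) ω) (w n ω))
    (C ρ : ℝ) (hC : 0 < C) (hρ0 : 0 < ρ) (hρ1 : ρ < 1)
    (hmix : ∀ v : Fin K → ℝ, (∀ j, 0 ≤ v j) → (∑ j, v j = 1) → ∀ m : ℕ,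
      enorm' (((α • (1 : Matrix (Fin K) (Fin K) ℝ) + (1 - α) • Matrix.of A) ^ m).mulVec
          (fun l => v l - π l)) ≤ C * ρ ^ m) :
    ∀ ε : ℝ, 0 < ε → ∀ i : ℕ, 1 ≤ i →
      (P {ω | ε < ∑ j, ((i : ℝ)⁻¹ * (∑ n ∈ Finset.Icc 1 i, w n ω j) - π j) ^ 2}).toReal
        ≤ (4 + 4 * C * ρ / (1 - ρ)) / (ε * i) := by
  set B : Matrix (Fin K) (Fin K) ℝ := α • (1 : Matrix (Fin K) (Fin K) ℝ) + (1 - α) • Matrix.of A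
    with hBdef
  -- basic facts about π
  have hπ1 : ∀ j, π j ≤ 1 := fun j => hπsum ▸
    Finset.single_le_sum (fun l _ => (hπpos l).le) (Finset.mem_univ j)
  -- w n ω is a probability vector
  have hw_simplex : ∀ n ω, (∀ j, 0 ≤ w n ω j) ∧ (∑ j, w n ω j) = 1 := by
    intro n
    induction n with
    | zero =>
      intro ω
      rw [hw0]
      constructor
      · intro j; dsimp only; split <;> norm_num
      · simp
    | succ n ih =>
      intro ω
      obtain ⟨hpos, hsum⟩ := ih ω
      obtain ⟨⟨hMpos, hMsum⟩, _⟩ := hval (n+1) ω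
      rw [hwrec]
      constructor
      · intro j
        exact add_nonneg (mul_nonneg hα0 (hpos j)) (mul_nonneg (by linarith)
          (Finset.sum_nonneg fun l _ => mul_nonneg (hMpos j l) (hpos l)))
      · unfold upd
        rw [Finset.sum_add_distrib, ← Finset.mul_sum, ← Finset.mul_sum, hsum]
        rw [Finset.sum_comm]
        have : ∀ l, ∑ j, An (n+1) ω j l * w n ω l = w n ω l := by
          intro l; rw [← Finset.sum_mul, hMsum l, one_mul]
        rw [Finset.sum_congr rfl fun l _ => this l, hsum]
        ring
  have hwbd : ∀ n ω j, 0 ≤ w n ω j ∧ w n ω j ≤ 1 := by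
    intro n ω j
    obtain ⟨hpos, hsum⟩ := hw_simplex n ω
    exact ⟨hpos j, hsum ▸ Finset.single_le_sum (fun l _ => hpos l) (Finset.mem_univ j)⟩
  have hdbd : ∀ n ω j, |w n ω j - π j| ≤ 1 := by
    intro n ω j
    obtain ⟨h0, h1⟩ := hwbd n ω j
    have := hπpos j; have := hπ1 j
    rw [abs_le]; constructor <;> linarith
  -- measurability
  have hwmeas : ∀ n j, Measurable fun ω => w n ω j := by
    intro n
    induction n with
    | zero =>
      intro j
      have : (fun ω => w 0 ω j) = fun _ => if j = k then (1:ℝ) else 0 := by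
        funext ω; rw [hw0]
      rw [this]; exact measurable_const
    | succ n ih =>
      intro j
      have : (fun ω => w (n+1) ω j)
          = fun ω => α * w n ω j + (1 - α) * ∑ l, An (n+1) ω j l * w n ω l := by
        funext ω; rw [hwrec]; rfl
      rw [this]
      apply Measurable.add
      · exact measurable_const.mul (ih j)
      · exact measurable_const.mul (Finset.measurable_sum _ fun l _ =>
          (((measurable_pi_apply l).comp ((measurable_pi_apply j).comp (hmeas (n+1)))).mul (ih l)))
  have hdmeas : ∀ n j, Measurable fun ω => w n ω j - π j :=
    fun n j => (hwmeas n j).sub measurable_const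
  -- integrability helper
  have hint : ∀ (f : Ω → ℝ) (c : ℝ), Measurable f → (∀ ω, |f ω| ≤ c) → Integrable f P := by
    intro f c hf hc
    exact (integrable_const c).mono' hf.aestronglyMeasurable
      (Filter.Eventually.of_forall fun ω => by simpa using hc ω)
  have hprod_int : ∀ n m j r, Integrable (fun ω => (w n ω j - π j) * (w m ω r - π r)) P := by
    intro n m j r
    apply hint _ 1 ((hdmeas n j).mul (hdmeas m r))
    intro ω
    simp only [Pi.mul_apply]
    rw [abs_mul]
    exact mul_le_one₀ (hdbd n ω j) (abs_nonneg _) (hdbd m ω r)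
  have hprodw_int : ∀ n m j r, Integrable (fun ω => (w n ω j - π j) * (w m ω r)) P := by
    intro n m j r
    apply hint _ 1 ((hdmeas n j).mul (hwmeas m r))
    intro ω
    simp only [Pi.mul_apply]
    rw [abs_mul]
    apply mul_le_one₀ (hdbd n ω j) (abs_nonneg _)
    rw [abs_of_nonneg (hwbd m ω r).1]; exact (hwbd m ω r).2
  have hd_int : ∀ n j, Integrable (fun ω => w n ω j - π j) P :=
    fun n j => hint _ 1 (hdmeas n j) (hdbd n · j)
  -- w in terms of Wit
  have hwW : ∀ n ω, w n ω = Wit α k (fun t => An t ω) n := by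
    intro n
    induction n with
    | zero => intro ω; rw [hw0]; rfl
    | succ n ih => intro ω; rw [hwrec, ih ω]; rfl
  -- independence step
  have hindep : ∀ n m : ℕ, n ≤ m → ∀ (j r l r' : Fin K),
      ∫ ω, An (m+1) ω l r' * ((w n ω j - π j) * (w m ω r)) ∂P
        = A l r' * ∫ ω, (w n ω j - π j) * (w m ω r) ∂P := by
    intro n m hnm j r l r'
    set S : Finset ℕ := Finset.Icc 1 m with hS
    have hdisj : Disjoint ({m+1} : Finset ℕ) S := by
      simp only [hS, Finset.disjoint_singleton_left, Finset.mem_Icc]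
      omega
    have hI := hiid.indepFun_finset {m+1} S hdisj hmeas
    set ext : (S → (Fin K → Fin K → ℝ)) → (ℕ → Fin K → Fin K → ℝ) :=
      fun f t => if h : t ∈ S then f ⟨t, h⟩ else 0 with hext
    have hext_meas : Measurable ext := by
      apply measurable_pi_lambda
      intro t
      by_cases h : t ∈ S
      · simp only [hext, h, dif_pos]
        exact measurable_pi_apply _
      · simp only [hext, h, dif_neg, not_false_iff]
        exact measurable_const
    set φ : (({m+1} : Finset ℕ) → (Fin K → Fin K → ℝ)) → ℝ :=
      fun f => f ⟨m+1, Finset.mem_singleton_self _⟩ l r' with hφ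
    have hφ_meas : Measurable φ :=
      (measurable_pi_apply r').comp ((measurable_pi_apply l).comp (measurable_pi_apply _))
    set ψ : (S → (Fin K → Fin K → ℝ)) → ℝ :=
      fun f => (Wit α k (ext f) n j - π j) * (Wit α k (ext f) m r) with hψ
    have hψ_meas : Measurable ψ := by
      apply Measurable.mul
      · exact (((measurable_pi_apply j).comp ((Wit_measurable α k n).comp hext_meas)).sub
          measurable_const)
      · exact ((measurable_pi_apply r).comp ((Wit_measurable α k m).comp hext_meas))
    have hIc := hI.comp hφ_meas hψ_meas
    have he1 : (φ ∘ fun ω (t : ({m+1} : Finset ℕ)) => An t ω) = fun ω => An (m+1) ω l r' := rfl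
    have hagree : ∀ ω (p : ℕ), p ≤ m →
        Wit α k (ext fun t : S => An t ω) p = Wit α k (fun t => An t ω) p := by
      intro ω p hp
      apply Wit_congr
      intro t h1 h2
      have ht : t ∈ S := by simp [hS, Finset.mem_Icc]; omega
      simp only [hext, ht, dif_pos]
    have he2 : (ψ ∘ fun ω (t : S) => An t ω)
        = fun ω => (w n ω j - π j) * (w m ω r) := by
      funext ω
      simp only [Function.comp_apply, hψ]
      rw [hagree ω n hnm, hagree ω m le_rfl, ← hwW, ← hwW]
    rw [he1, he2] at hIc
    have := IndepFun.integral_fun_mul_eq_mul_integral hIc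
      (((measurable_pi_apply r').comp ((measurable_pi_apply l).comp
        (hmeas (m+1)))).aestronglyMeasurable)
      (((hdmeas n j).mul (hwmeas m r)).aestronglyMeasurable)
    rw [this, hmean (m+1) l r']
  -- one-step recursion for the covariance vector
  have hsplit : ∀ n m j r, ∫ ω, (w n ω j - π j) * (w m ω r - π r) ∂P
      = (∫ ω, (w n ω j - π j) * (w m ω r) ∂P) - π r * ∫ ω, (w n ω j - π j) ∂P := by
    intro n m j r
    have : (fun ω => (w n ω j - π j) * (w m ω r - π r))
        = fun ω => (w n ω j - π j) * (w m ω r) - π r * (w n ω j - π j) := by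
      funext ω; ring
    rw [this, integral_sub (hprodw_int n m j r) ((hd_int n j).const_mul (π r)),
      integral_const_mul]
  have hu_rec : ∀ (n : ℕ) (j : Fin K) (d : ℕ) (l : Fin K),
      ∫ ω, (w n ω j - π j) * (w (n+d+1) ω l - π l) ∂P
        = α * (∫ ω, (w n ω j - π j) * (w (n+d) ω l - π l) ∂P)
          + (1-α) * ∑ r, A l r * ∫ ω, (w n ω j - π j) * (w (n+d) ω r - π r) ∂P := by
    intro n j d l
    have hAint : ∀ r, Integrable
        (fun ω => An (n+d+1) ω l r * ((w n ω j - π j) * (w (n+d) ω r))) P := by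
      intro r
      apply hint _ 1 ((((measurable_pi_apply r).comp ((measurable_pi_apply l).comp
        (hmeas (n+d+1)))).mul ((hdmeas n j).mul (hwmeas (n+d) r))))
      intro ω
      simp only [Pi.mul_apply, Function.comp_apply]
      rw [abs_mul, abs_mul]
      have hA01 : |An (n+d+1) ω l r| ≤ 1 := by
        rcases (hval (n+d+1) ω).2 l r with h | h <;> rw [h] <;> norm_num
      have hw01 : |w (n+d) ω r| ≤ 1 := by
        rw [abs_of_nonneg (hwbd (n+d) ω r).1]; exact (hwbd (n+d) ω r).2
      have h1 := hdbd n ω j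
      calc |An (n+d+1) ω l r| * (|w n ω j - π j| * |w (n+d) ω r|)
          ≤ 1 * (1 * 1) := by
            apply mul_le_mul hA01 _ (mul_nonneg (abs_nonneg _) (abs_nonneg _)) zero_le_one
            exact mul_le_mul h1 hw01 (abs_nonneg _) zero_le_one
        _ = 1 := by norm_num
    -- pointwise expansion
    have hpt : ∀ ω, (w n ω j - π j) * (w (n+d+1) ω l - π l)
        = α * ((w n ω j - π j) * (w (n+d) ω l))
          + (1-α) * ∑ r, An (n+d+1) ω l r * ((w n ω j - π j) * (w (n+d) ω r))
          - π l * (w n ω j - π j) := by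
      intro ω
      have hrec := hwrec (n+d) ω
      rw [hrec]
      show (w n ω j - π j) * (α * w (n+d) ω l
          + (1-α) * (∑ r, An (n+d+1) ω l r * w (n+d) ω r) - π l) = _
      have h1 : ∑ r, An (n+d+1) ω l r * ((w n ω j - π j) * w (n+d) ω r)
          = (w n ω j - π j) * ∑ r, An (n+d+1) ω l r * w (n+d) ω r := by
        rw [Finset.mul_sum]
        exact Finset.sum_congr rfl fun r _ => by ring
      rw [h1]
      ring
    rw [integral_congr_ae (Filter.Eventually.of_forall hpt)]
    have hfA : Integrable (fun ω => α * ((w n ω j - π j) * (w (n+d) ω l))) P :=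
      (hprodw_int n (n+d) j l).const_mul α
    have hfsum : Integrable (fun ω => (1-α) * ∑ r, An (n+d+1) ω l r
        * ((w n ω j - π j) * (w (n+d) ω r))) P :=
      ((integrable_finset_sum _ fun r _ => hAint r).const_mul _)
    have hfadd : Integrable (fun ω => α * ((w n ω j - π j) * (w (n+d) ω l))
        + (1-α) * ∑ r, An (n+d+1) ω l r * ((w n ω j - π j) * (w (n+d) ω r))) P :=
      hfA.add hfsum
    have hgc : Integrable (fun ω => π l * (w n ω j - π j)) P :=
      (hd_int n j).const_mul (π l)
    rw [integral_sub hfadd hgc, integral_add hfA hfsum,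
      integral_const_mul, integral_const_mul, integral_const_mul,
      integral_finset_sum _ fun r _ => hAint r]
    rw [Finset.sum_congr rfl fun r _ => hindep n (n+d) (Nat.le_add_right n d) j r l r]
    simp only [hsplit n (n+d) j]
    have h2 : ∑ r, A l r * ((∫ ω, (w n ω j - π j) * (w (n+d) ω r) ∂P)
          - π r * ∫ ω, (w n ω j - π j) ∂P)
        = (∑ r, A l r * ∫ ω, (w n ω j - π j) * (w (n+d) ω r) ∂P)
          - π l * ∫ ω, (w n ω j - π j) ∂P := by
      have h3 : ∀ r : Fin K, A l r * ((∫ ω, (w n ω j - π j) * (w (n+d) ω r) ∂P)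
            - π r * ∫ ω, (w n ω j - π j) ∂P)
          = A l r * ∫ ω, (w n ω j - π j) * (w (n+d) ω r) ∂P
            - A l r * π r * ∫ ω, (w n ω j - π j) ∂P := fun r => by ring
      rw [Finset.sum_congr rfl fun r _ => h3 r, Finset.sum_sub_distrib, ← Finset.sum_mul,
        hπfix l]
    rw [h2]
    ring
  -- matrix power form
  have hu_pow : ∀ (n : ℕ) (j : Fin K) (d : ℕ) (l : Fin K),
      ∫ ω, (w n ω j - π j) * (w (n+d) ω l - π l) ∂P
        = ∑ r, (B^d) l r * ∫ ω, (w n ω j - π j) * (w n ω r - π r) ∂P := by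
    intro n j d
    induction d with
    | zero =>
      intro l
      simp [Matrix.one_apply, ite_mul, Finset.sum_ite_eq]
    | succ d ih =>
      intro l
      have hBpow : ∀ r : Fin K, (B^(d+1)) l r
          = α * (B^d) l r + (1-α) * ∑ s, A l s * (B^d) s r := by
        intro r
        rw [pow_succ', Matrix.mul_apply]
        have hBe : ∀ s : Fin K, B l s = α * (if l = s then (1:ℝ) else 0) + (1-α) * A l s := by
          intro s
          simp [hBdef, Matrix.add_apply, Matrix.smul_apply, Matrix.one_apply, smul_eq_mul]
        simp only [hBe]
        calc ∑ s, (α * (if l = s then (1:ℝ) else 0) + (1-α) * A l s) * (B^d) s r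
            = ∑ s, (α * ((if l = s then (1:ℝ) else 0) * (B^d) s r)
                + (1-α) * (A l s * (B^d) s r)) :=
              Finset.sum_congr rfl fun s _ => by ring
          _ = α * ∑ s, (if l = s then (1:ℝ) else 0) * (B^d) s r
                + (1-α) * ∑ s, A l s * (B^d) s r := by
              rw [Finset.sum_add_distrib, Finset.mul_sum, Finset.mul_sum]
          _ = α * (B^d) l r + (1-α) * ∑ s, A l s * (B^d) s r := by
              simp [ite_mul, Finset.sum_ite_eq]
      show ∫ ω, (w n ω j - π j) * (w (n+d+1) ω l - π l) ∂P = _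
      rw [hu_rec n j d l]
      simp only [ih]
      set u : Fin K → ℝ := fun r => ∫ ω, (w n ω j - π j) * (w n ω r - π r) ∂P with hu
      have lhs2 : (1-α) * ∑ r, A l r * ∑ s, (B^d) r s * u s
          = ∑ s, ((1-α) * ∑ r, A l r * (B^d) r s) * u s := by
        rw [Finset.mul_sum]
        have e1 : ∀ r : Fin K, (1-α) * (A l r * ∑ s, (B^d) r s * u s)
            = ∑ s, (1-α) * (A l r * ((B^d) r s * u s)) := by
          intro r; rw [Finset.mul_sum, Finset.mul_sum]
        simp only [e1]
        rw [Finset.sum_comm]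
        apply Finset.sum_congr rfl
        intro s _
        conv_rhs => rw [Finset.mul_sum, Finset.sum_mul]
        apply Finset.sum_congr rfl
        intro r _
        ring
      rw [lhs2, Finset.mul_sum, ← Finset.sum_add_distrib]
      apply Finset.sum_congr rfl
      intro r _
      rw [hBpow r]
      ring
  -- covariance bound
  have hcov : ∀ n d : ℕ, ∫ ω, (∑ j, (w n ω j - π j) * (w (n+d) ω j - π j)) ∂P
      ≤ 2 * C * ρ ^ d := by
    intro n d
    rw [integral_finset_sum _ fun j _ => hprod_int n (n+d) j j]
    simp only [hu_pow n]
    have hpull : ∀ j : Fin K, ∑ r, (B^d) j r * ∫ ω, (w n ω j - π j) * (w n ω r - π r) ∂P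
        = ∫ ω, ∑ r, (B^d) j r * ((w n ω j - π j) * (w n ω r - π r)) ∂P := by
      intro j
      rw [integral_finset_sum _ fun r _ => (hprod_int n n j r).const_mul _]
      exact Finset.sum_congr rfl fun r _ => (integral_const_mul _ _).symm
    simp only [hpull]
    rw [← integral_finset_sum (f := fun j ω => ∑ r, (B^d) j r * ((w n ω j - π j) * (w n ω r - π r)))
      _ fun j (_ : j ∈ Finset.univ) =>
      integrable_finset_sum _ fun r _ => (hprod_int n n j r).const_mul _]
    have hbd : ∀ ω, ∑ j, ∑ r, (B^d) j r * ((w n ω j - π j) * (w n ω r - π r))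
        ≤ 2 * C * ρ^d := by
      intro ω
      have hmv : ∀ j : Fin K, (B^d).mulVec (fun l => w n ω l - π l) j
          = ∑ r, (B^d) j r * (w n ω r - π r) := by
        intro j; simp [Matrix.mulVec, dotProduct]
      have hrw2 : ∑ j, ∑ r, (B^d) j r * ((w n ω j - π j) * (w n ω r - π r))
          = ∑ j, (w n ω j - π j) * (B^d).mulVec (fun l => w n ω l - π l) j := by
        apply Finset.sum_congr rfl
        intro j _
        rw [hmv j, Finset.mul_sum]
        exact Finset.sum_congr rfl fun r _ => by ring
      rw [hrw2]
      have hcs := Real.sum_mul_le_sqrt_mul_sqrt Finset.univ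
        (fun j => w n ω j - π j) (fun j => (B^d).mulVec (fun l => w n ω l - π l) j)
      have hsq2 : Real.sqrt (∑ j, (w n ω j - π j)^2) ≤ 2 := by
        have hs : ∑ j, (w n ω j - π j)^2 ≤ 4 := by
          have : ∑ j, (w n ω j - π j)^2 ≤ ∑ j, (w n ω j + π j) := by
            apply Finset.sum_le_sum
            intro j _
            have h1 := hdbd n ω j
            have h3 : |w n ω j - π j| ≤ w n ω j + π j := by
              have := (hwbd n ω j).1; have := (hπpos j).le
              rw [abs_le]; constructor <;> linarith
            calc (w n ω j - π j)^2 = |w n ω j - π j| * |w n ω j - π j| := by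
                  rw [← abs_mul, sq]; rw [abs_of_nonneg (mul_self_nonneg _)]
              _ ≤ 1 * |w n ω j - π j| := mul_le_mul_of_nonneg_right h1 (abs_nonneg _)
              _ = |w n ω j - π j| := one_mul _
              _ ≤ w n ω j + π j := h3
          have h4 : ∑ j, (w n ω j + π j) = 2 := by
            rw [Finset.sum_add_distrib, (hw_simplex n ω).2, hπsum]; norm_num
          linarith
        calc Real.sqrt (∑ j, (w n ω j - π j)^2) ≤ Real.sqrt 4 := Real.sqrt_le_sqrt hs
          _ = 2 := by
            rw [show (4:ℝ) = 2^2 by norm_num, Real.sqrt_sq (by norm_num : (0:ℝ) ≤ 2)]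
      have hmixb := hmix (w n ω) (hw_simplex n ω).1 (hw_simplex n ω).2 d
      have hmixb' : Real.sqrt (∑ j, ((B^d).mulVec (fun l => w n ω l - π l) j)^2)
          ≤ C * ρ^d := hmixb
      calc ∑ j, (w n ω j - π j) * (B^d).mulVec (fun l => w n ω l - π l) j
          ≤ Real.sqrt (∑ j, (w n ω j - π j)^2)
            * Real.sqrt (∑ j, ((B^d).mulVec (fun l => w n ω l - π l) j)^2) := hcs
        _ ≤ 2 * (C * ρ^d) :=
            mul_le_mul hsq2 hmixb' (Real.sqrt_nonneg _) (by norm_num)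
        _ = 2 * C * ρ^d := by ring
    calc ∫ ω, (∑ j, ∑ r, (B^d) j r * ((w n ω j - π j) * (w n ω r - π r))) ∂P
        ≤ ∫ _, (2 * C * ρ^d : ℝ) ∂P := by
          apply integral_mono _ (integrable_const _) hbd
          exact integrable_finset_sum _ fun j _ =>
            integrable_finset_sum _ fun r _ => (hprod_int n n j r).const_mul _
      _ = 2 * C * ρ^d := by simp
  have hdiag : ∀ n : ℕ, ∫ ω, (∑ j, (w n ω j - π j) * (w n ω j - π j)) ∂P ≤ 2 := by
    intro n
    have hb : ∀ ω, (∑ j, (w n ω j - π j) * (w n ω j - π j)) ≤ 2 := by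
      intro ω
      calc ∑ j, (w n ω j - π j) * (w n ω j - π j)
          ≤ ∑ j, (w n ω j + π j) := by
            apply Finset.sum_le_sum
            intro j _
            have h1 := hdbd n ω j
            have h2 : (w n ω j - π j) * (w n ω j - π j) = |w n ω j - π j| * |w n ω j - π j| := by
              rw [← abs_mul, abs_of_nonneg (mul_self_nonneg _)]
            rw [h2]
            have h3 : |w n ω j - π j| ≤ w n ω j + π j := by
              have := (hwbd n ω j).1; have := (hπpos j).le
              rw [abs_le]; constructor <;> linarith
            calc |w n ω j - π j| * |w n ω j - π j| ≤ 1 * |w n ω j - π j| :=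
                  mul_le_mul_of_nonneg_right h1 (abs_nonneg _)
              _ = |w n ω j - π j| := one_mul _
              _ ≤ w n ω j + π j := h3
        _ = 2 := by rw [Finset.sum_add_distrib, (hw_simplex n ω).2, hπsum]; norm_num
    calc ∫ ω, (∑ j, (w n ω j - π j) * (w n ω j - π j)) ∂P
        ≤ ∫ _, (2:ℝ) ∂P := by
          apply integral_mono _ (integrable_const 2) hb
          exact integrable_finset_sum _ fun j _ => hprod_int n n j j
      _ = 2 := by simp
  -- final assembly
  intro ε hε i hi
  have hiR : (1:ℝ) ≤ (i:ℝ) := by exact_mod_cast hi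
  have hi0 : (0:ℝ) < (i:ℝ) := by linarith
  have hcard : (Finset.Icc 1 i).card = i := by rw [Nat.card_Icc]; omega
  have hcoord : ∀ (ω : Ω) (j : Fin K), (i : ℝ)⁻¹ * (∑ n ∈ Finset.Icc 1 i, w n ω j) - π j
      = (i : ℝ)⁻¹ * ∑ n ∈ Finset.Icc 1 i, (w n ω j - π j) := by
    intro ω j
    rw [Finset.sum_sub_distrib, Finset.sum_const, hcard, mul_sub]
    congr 1
    rw [nsmul_eq_mul, ← mul_assoc, inv_mul_cancel₀ (ne_of_gt hi0), one_mul]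
  have hXeq : ∀ ω, ∑ j, ((i : ℝ)⁻¹ * (∑ n ∈ Finset.Icc 1 i, w n ω j) - π j) ^ 2
      = ((i:ℝ)⁻¹)^2 * ∑ n ∈ Finset.Icc 1 i, ∑ m ∈ Finset.Icc 1 i,
          (∑ j, (w n ω j - π j) * (w m ω j - π j)) := by
    intro ω
    simp only [hcoord]
    have h1 : ∀ j : Fin K, ((i:ℝ)⁻¹ * ∑ n ∈ Finset.Icc 1 i, (w n ω j - π j))^2
        = ((i:ℝ)⁻¹)^2 * ∑ n ∈ Finset.Icc 1 i, ∑ m ∈ Finset.Icc 1 i,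
            (w n ω j - π j) * (w m ω j - π j) := by
      intro j
      rw [mul_pow, sq (∑ n ∈ Finset.Icc 1 i, (w n ω j - π j)), Finset.sum_mul_sum]
    simp only [h1]
    rw [← Finset.mul_sum]
    congr 1
    rw [Finset.sum_comm]
    apply Finset.sum_congr rfl
    intro n _
    rw [Finset.sum_comm]
  have hcov_int : ∀ n m : ℕ, Integrable (fun ω => ∑ j, (w n ω j - π j) * (w m ω j - π j)) P :=
    fun n m => integrable_finset_sum _ fun j _ => hprod_int n m j j
  have hX_int : Integrable
      (fun ω => ∑ j, ((i : ℝ)⁻¹ * (∑ n ∈ Finset.Icc 1 i, w n ω j) - π j) ^ 2) P := by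
    have he : (fun ω => ∑ j, ((i : ℝ)⁻¹ * (∑ n ∈ Finset.Icc 1 i, w n ω j) - π j) ^ 2)
        = fun ω => ((i:ℝ)⁻¹)^2 * ∑ n ∈ Finset.Icc 1 i, ∑ m ∈ Finset.Icc 1 i,
            (∑ j, (w n ω j - π j) * (w m ω j - π j)) := funext hXeq
    rw [he]
    exact ((integrable_finset_sum _ fun n _ =>
      integrable_finset_sum _ fun m _ => hcov_int n m).const_mul _)
  have hpair : ∀ n m : ℕ, ∫ ω, (∑ j, (w n ω j - π j) * (w m ω j - π j)) ∂P
      ≤ (if n = m then (2:ℝ) else 0) + (if n < m then 2*C*ρ^(m-n) else 0)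
        + (if m < n then 2*C*ρ^(n-m) else 0) := by
    intro n m
    rcases lt_trichotomy n m with h | h | h
    · have hc := hcov n (m-n)
      rw [Nat.add_sub_cancel' h.le] at hc
      simp only [if_pos h, if_neg (Nat.lt_asymm h), if_neg (ne_of_lt h)]
      linarith
    · subst h
      simpa using hdiag n
    · have hc := hcov m (n-m)
      rw [Nat.add_sub_cancel' h.le] at hc
      have hsym : (fun ω => ∑ j, (w n ω j - π j) * (w m ω j - π j))
          = fun ω => ∑ j, (w m ω j - π j) * (w n ω j - π j) := by
        funext ω; exact Finset.sum_congr rfl fun j _ => mul_comm _ _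
      rw [hsym]
      simp only [if_neg (Nat.lt_asymm h), if_pos h, if_neg (ne_of_gt h)]
      linarith
  have hgeom : ∀ N : ℕ, ∑ t ∈ Finset.range N, ρ^t ≤ 1/(1-ρ) := by
    intro N
    rw [geom_sum_eq (ne_of_lt hρ1)]
    rw [show (ρ^N - 1)/(ρ - 1) = (1 - ρ^N)/(1 - ρ) by
      rw [← neg_div_neg_eq, neg_sub, neg_sub]]
    apply div_le_div₀ (by norm_num) _ (by linarith) le_rfl
    have : 0 ≤ ρ^N := pow_nonneg hρ0.le N
    linarith
  have hrow : ∀ n : ℕ, ∑ m ∈ Finset.Icc 1 i, (if n < m then 2*C*ρ^(m-n) else 0)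
      ≤ 2*C*(ρ/(1-ρ)) := by
    intro n
    rw [← Finset.sum_filter]
    have hsub : (Finset.Icc 1 i).filter (fun m => n < m)
        ⊆ Finset.image (fun t => n+1+t) (Finset.range i) := by
      intro m hm
      simp only [Finset.mem_filter, Finset.mem_Icc] at hm
      simp only [Finset.mem_image, Finset.mem_range]
      exact ⟨m - n - 1, by omega, by omega⟩
    calc ∑ m ∈ (Finset.Icc 1 i).filter (fun m => n < m), 2*C*ρ^(m-n)
        ≤ ∑ m ∈ Finset.image (fun t => n+1+t) (Finset.range i), 2*C*ρ^(m-n) := by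
          apply Finset.sum_le_sum_of_subset_of_nonneg hsub
          intro m _ _
          positivity
      _ = ∑ t ∈ Finset.range i, 2*C*ρ^(n+1+t-n) := by
          apply Finset.sum_image
          intro a _ b _ hab
          simp only at hab
          omega
      _ = ∑ t ∈ Finset.range i, 2*C*ρ*ρ^t := by
          apply Finset.sum_congr rfl
          intro t _
          rw [show n+1+t-n = t+1 from by omega, pow_succ]
          ring
      _ = 2*C*ρ * ∑ t ∈ Finset.range i, ρ^t := by
          rw [Finset.mul_sum]
      _ ≤ 2*C*ρ * (1/(1-ρ)) := by
          apply mul_le_mul_of_nonneg_left (hgeom i)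
          positivity
      _ = 2*C*(ρ/(1-ρ)) := by ring
  have hEX : ∫ ω, (∑ j, ((i : ℝ)⁻¹ * (∑ n ∈ Finset.Icc 1 i, w n ω j) - π j) ^ 2) ∂P
      ≤ (4 + 4*C*ρ/(1-ρ)) / i := by
    have he : ∫ ω, (∑ j, ((i : ℝ)⁻¹ * (∑ n ∈ Finset.Icc 1 i, w n ω j) - π j) ^ 2) ∂P
        = ((i:ℝ)⁻¹)^2 * ∑ n ∈ Finset.Icc 1 i, ∑ m ∈ Finset.Icc 1 i,
            ∫ ω, (∑ j, (w n ω j - π j) * (w m ω j - π j)) ∂P := by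
      rw [integral_congr_ae (Filter.Eventually.of_forall hXeq), integral_const_mul,
        integral_finset_sum _ (fun n _ => integrable_finset_sum _ fun m _ => hcov_int n m)]
      congr 1
      refine Finset.sum_congr rfl fun n _ => ?_
      rw [integral_finset_sum _ fun m _ => hcov_int n m]
    rw [he]
    have hdouble : ∑ n ∈ Finset.Icc 1 i, ∑ m ∈ Finset.Icc 1 i,
        ∫ ω, (∑ j, (w n ω j - π j) * (w m ω j - π j)) ∂P
        ≤ 2*i + 2*(i*(2*C*(ρ/(1-ρ)))) := by
      calc ∑ n ∈ Finset.Icc 1 i, ∑ m ∈ Finset.Icc 1 i,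
          ∫ ω, (∑ j, (w n ω j - π j) * (w m ω j - π j)) ∂P
          ≤ ∑ n ∈ Finset.Icc 1 i, ∑ m ∈ Finset.Icc 1 i,
            ((if n = m then (2:ℝ) else 0) + (if n < m then 2*C*ρ^(m-n) else 0)
              + (if m < n then 2*C*ρ^(n-m) else 0)) :=
            Finset.sum_le_sum fun n _ => Finset.sum_le_sum fun m _ => hpair n m
        _ = (∑ n ∈ Finset.Icc 1 i, ∑ m ∈ Finset.Icc 1 i, (if n = m then (2:ℝ) else 0))
            + (∑ n ∈ Finset.Icc 1 i, ∑ m ∈ Finset.Icc 1 i,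
                (if n < m then 2*C*ρ^(m-n) else 0))
            + (∑ n ∈ Finset.Icc 1 i, ∑ m ∈ Finset.Icc 1 i,
                (if m < n then 2*C*ρ^(n-m) else 0)) := by
            simp only [Finset.sum_add_distrib]
        _ ≤ 2*i + (i*(2*C*(ρ/(1-ρ)))) + (i*(2*C*(ρ/(1-ρ)))) := by
            have hS1 : ∑ n ∈ Finset.Icc 1 i, ∑ m ∈ Finset.Icc 1 i,
                (if n = m then (2:ℝ) else 0) = 2*i := by
              have hin : ∀ n ∈ Finset.Icc 1 i,
                  (∑ m ∈ Finset.Icc 1 i, (if n = m then (2:ℝ) else 0)) = 2 := by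
                intro n hn
                rw [Finset.sum_ite_eq]
                exact if_pos hn
              rw [Finset.sum_congr rfl hin, Finset.sum_const, hcard, nsmul_eq_mul]
              ring
            have hS2 : ∑ n ∈ Finset.Icc 1 i, ∑ m ∈ Finset.Icc 1 i,
                (if n < m then 2*C*ρ^(m-n) else 0) ≤ i*(2*C*(ρ/(1-ρ))) := by
              calc ∑ n ∈ Finset.Icc 1 i, ∑ m ∈ Finset.Icc 1 i,
                  (if n < m then 2*C*ρ^(m-n) else 0)
                  ≤ ∑ n ∈ Finset.Icc 1 i, 2*C*(ρ/(1-ρ)) :=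
                    Finset.sum_le_sum fun n _ => hrow n
                _ = i*(2*C*(ρ/(1-ρ))) := by
                    rw [Finset.sum_const, hcard, nsmul_eq_mul]
            have hS3 : ∑ n ∈ Finset.Icc 1 i, ∑ m ∈ Finset.Icc 1 i,
                (if m < n then 2*C*ρ^(n-m) else 0) ≤ i*(2*C*(ρ/(1-ρ))) := by
              rw [Finset.sum_comm]
              calc ∑ m ∈ Finset.Icc 1 i, ∑ n ∈ Finset.Icc 1 i,
                  (if m < n then 2*C*ρ^(n-m) else 0)
                  ≤ ∑ m ∈ Finset.Icc 1 i, 2*C*(ρ/(1-ρ)) :=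
                    Finset.sum_le_sum fun m _ => hrow m
                _ = i*(2*C*(ρ/(1-ρ))) := by
                    rw [Finset.sum_const, hcard, nsmul_eq_mul]
            rw [hS1]
            linarith
        _ = 2*i + 2*(i*(2*C*(ρ/(1-ρ)))) := by ring
    calc ((i:ℝ)⁻¹)^2 * ∑ n ∈ Finset.Icc 1 i, ∑ m ∈ Finset.Icc 1 i,
        ∫ ω, (∑ j, (w n ω j - π j) * (w m ω j - π j)) ∂P
        ≤ ((i:ℝ)⁻¹)^2 * (2*i + 2*(i*(2*C*(ρ/(1-ρ))))) :=
          mul_le_mul_of_nonneg_left hdouble (sq_nonneg _)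
      _ = (2 + 4*C*ρ/(1-ρ)) / i := by
          have h1ρ : (1:ℝ) - ρ ≠ 0 := by linarith
          field_simp
          ring
      _ ≤ (4 + 4*C*ρ/(1-ρ)) / i := by
          have h24 : (2:ℝ) + 4*C*ρ/(1-ρ) ≤ 4 + 4*C*ρ/(1-ρ) := by linarith
          have h4nn : (0:ℝ) ≤ 4 + 4*C*ρ/(1-ρ) := by
            have : (0:ℝ) ≤ 4*C*ρ/(1-ρ) := div_nonneg (by positivity) (by linarith)
            linarith
          exact div_le_div₀ h4nn h24 hi0 le_rfl
  have hXnn : 0 ≤ᵐ[P]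
      fun ω => ∑ j, ((i : ℝ)⁻¹ * (∑ n ∈ Finset.Icc 1 i, w n ω j) - π j) ^ 2 :=
    Filter.Eventually.of_forall fun ω => Finset.sum_nonneg fun j _ => sq_nonneg _
  have hmarkov := mul_meas_ge_le_integral_of_nonneg hXnn hX_int ε
  have hmono : (P {ω | ε < ∑ j, ((i : ℝ)⁻¹ * (∑ n ∈ Finset.Icc 1 i, w n ω j) - π j) ^ 2}).toReal
      ≤ (P {ω | ε ≤ ∑ j, ((i : ℝ)⁻¹ * (∑ n ∈ Finset.Icc 1 i, w n ω j) - π j) ^ 2}).toReal :=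
    ENNReal.toReal_mono (measure_ne_top P _)
      (measure_mono (Set.setOf_subset_setOf.mpr fun ω h => le_of_lt h))
  have h4nn : (0:ℝ) ≤ 4 + 4*C*ρ/(1-ρ) := by
    have : (0:ℝ) ≤ 4*C*ρ/(1-ρ) := div_nonneg (by positivity) (by linarith)
    linarith
  calc (P {ω | ε < ∑ j, ((i : ℝ)⁻¹ * (∑ n ∈ Finset.Icc 1 i, w n ω j) - π j) ^ 2}).toReal
      ≤ (P {ω | ε ≤ ∑ j, ((i : ℝ)⁻¹ * (∑ n ∈ Finset.Icc 1 i, w n ω j) - π j) ^ 2}).toReal :=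
        hmono
    _ ≤ (∫ ω, (∑ j, ((i : ℝ)⁻¹ * (∑ n ∈ Finset.Icc 1 i, w n ω j) - π j) ^ 2) ∂P) / ε := by
        rw [le_div_iff₀ hε]
        calc (P {ω | ε ≤ ∑ j, ((i : ℝ)⁻¹ * (∑ n ∈ Finset.Icc 1 i, w n ω j) - π j) ^ 2}).toReal
              * ε
            = ε * (P {ω | ε ≤ ∑ j,
                ((i : ℝ)⁻¹ * (∑ n ∈ Finset.Icc 1 i, w n ω j) - π j) ^ 2}).toReal :=
              mul_comm _ _
          _ ≤ _ := hmarkov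
    _ ≤ ((4 + 4*C*ρ/(1-ρ)) / i) / ε :=
        div_le_div₀ (div_nonneg h4nn hi0.le) hEX hε le_rfl
    _ = (4 + 4 * C * ρ / (1 - ρ)) / (ε * i) := by
        rw [div_div, mul_comm (i:ℝ) ε]
end

section
/- Let A be a K×K left-stochastic, strongly connected matrix with Perron vector π, let (A_n)_{n≥1} be i.i.d. random left-stochastic 0/1-valued matrices with E[A_n] = A, fix α ∈ [0,1), ᾱ = 1−α, and define w_0 = e_k, w_n = (αI + ᾱA_n) w_{n−1}. Suppose C > 0 and ρ ∈ (0,1) are such that ‖(αI + ᾱA)^j (w − π)‖ ≤ C ρ^j for every probability vector w and every j ≥ 0. Then for all m ≤ n, E[ ⟨ w_m − π, w_n − π ⟩ ] ≤ 2 C ρ^{n−m}, where ⟨·,·⟩ is the Euclidean inner product. -/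
open MeasureTheory ProbabilityTheory Filter Topology

variable {K : ℕ}

/-- auxiliary -/
noncomputable def Bof (α : ℝ) (M : Fin K → Fin K → ℝ) : Matrix (Fin K) (Fin K) ℝ :=
  α • (1 : Matrix (Fin K) (Fin K) ℝ) + (1 - α) • Matrix.of M

lemma Bof_apply (α : ℝ) (M : Fin K → Fin K → ℝ) (j l : Fin K) :
    Bof α M j l = α * (if j = l then 1 else 0) + (1 - α) * M j l := by
  simp [Bof, Matrix.one_apply, Matrix.add_apply, Matrix.smul_apply, mul_comm]

lemma upd_eq_mulVec (α : ℝ) (M : Fin K → Fin K → ℝ) (v : Fin K → ℝ) :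
    upd α M v = (Bof α M).mulVec v := by
  funext j
  simp only [upd, Matrix.mulVec, dotProduct, Bof_apply, add_mul, Finset.sum_add_distrib,
    mul_assoc, mul_ite, mul_one, mul_zero, Finset.sum_ite_eq, Finset.mem_univ, if_true,
    ← Finset.mul_sum, ite_mul, zero_mul]

lemma leftStochastic_Bof {α : ℝ} (hα0 : 0 ≤ α) (hα1 : α ≤ 1) {M : Fin K → Fin K → ℝ}
    (hM : LeftStochastic M) : LeftStochastic (fun j l => Bof α M j l) := by
  constructor
  · intro j l
    dsimp only
    rw [Bof_apply]
    have h1 := hM.1 j l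
    have h2 : (0:ℝ) ≤ if j = l then 1 else 0 := by positivity
    nlinarith
  · intro l
    simp only [Bof_apply]
    rw [Finset.sum_add_distrib, ← Finset.mul_sum, ← Finset.mul_sum, hM.2 l]
    simp [Finset.sum_ite_eq, Finset.mem_univ]

lemma leftStochastic_mul {M N : Matrix (Fin K) (Fin K) ℝ}
    (hM : LeftStochastic (fun j l => M j l)) (hN : LeftStochastic (fun j l => N j l)) :
    LeftStochastic (fun j l => (M * N) j l) := by
  constructor
  · intro j l
    dsimp only
    rw [Matrix.mul_apply]
    exact Finset.sum_nonneg fun i _ => mul_nonneg (hM.1 j i) (hN.1 i l)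
  · intro l
    dsimp only
    simp only [Matrix.mul_apply]
    rw [Finset.sum_comm]
    have : ∀ i, ∑ j, M j i * N i l = N i l := by
      intro i
      rw [← Finset.sum_mul, hM.2 i, one_mul]
    simp only [this]
    exact hN.2 l

lemma leftStochastic_entry_le_one {M : Fin K → Fin K → ℝ} (hM : LeftStochastic M)
    (j l : Fin K) : M j l ≤ 1 := by
  have := Finset.single_le_sum (f := fun i => M i l) (fun i _ => hM.1 i l) (Finset.mem_univ j)
  rw [hM.2 l] at this
  exact this

lemma leftStochastic_mulVec {M : Matrix (Fin K) (Fin K) ℝ}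
    (hM : LeftStochastic (fun j l => M j l)) {v : Fin K → ℝ}
    (hv : ∀ j, 0 ≤ v j) (hv1 : ∑ j, v j = 1) :
    (∀ j, 0 ≤ M.mulVec v j) ∧ ∑ j, M.mulVec v j = 1 := by
  constructor
  · intro j
    simp only [Matrix.mulVec, dotProduct]
    exact Finset.sum_nonneg fun i _ => mul_nonneg (hM.1 j i) (hv i)
  · simp only [Matrix.mulVec, dotProduct]
    rw [Finset.sum_comm]
    have : ∀ i, ∑ j, M j i * v i = v i := by
      intro i
      rw [← Finset.sum_mul, hM.2 i, one_mul]
    simp only [this, hv1]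

lemma integrable_of_bound {Ω : Type*} [MeasurableSpace Ω] (P : Measure Ω)
    [IsProbabilityMeasure P] {f : Ω → ℝ} (hf : Measurable f) (M : ℝ)
    (h : ∀ ω, |f ω| ≤ M) : Integrable f P := by
  refine Integrable.mono' (integrable_const M) hf.aestronglyMeasurable ?_
  filter_upwards with ω
  simpa [Real.norm_eq_abs] using h ω

lemma abs_sum_mul_le (f g : Fin K → ℝ) :
    |∑ j, f j * g j| ≤ Real.sqrt (∑ j, f j ^ 2) * Real.sqrt (∑ j, g j ^ 2) := by
  have h := Finset.sum_mul_sq_le_sq_mul_sq Finset.univ f g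
  have h1 : |∑ j, f j * g j| = Real.sqrt ((∑ j, f j * g j) ^ 2) := by
    rw [Real.sqrt_sq_eq_abs]
  rw [h1, ← Real.sqrt_mul (Finset.sum_nonneg fun i _ => sq_nonneg _)]
  exact Real.sqrt_le_sqrt h

def Wf (α : ℝ) (k : Fin K) (M : ℕ → Fin K → Fin K → ℝ) : ℕ → Fin K → ℝ
  | 0 => fun j => if j = k then (1 : ℝ) else 0
  | r + 1 => upd α (M (r + 1)) (Wf α k M r)

noncomputable def Pf (α : ℝ) (m : ℕ) (M : ℕ → Fin K → Fin K → ℝ) :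
    ℕ → Matrix (Fin K) (Fin K) ℝ
  | 0 => 1
  | s + 1 => Bof α (M (m + s + 1)) * Pf α m M s

lemma Wf_congr {α : ℝ} {k : Fin K} {M M' : ℕ → Fin K → Fin K → ℝ} :
    ∀ r : ℕ, (∀ i, i ≤ r → M i = M' i) → Wf α k M r = Wf α k M' r
  | 0, _ => rfl
  | r + 1, h => by
    show upd α (M (r+1)) (Wf α k M r) = upd α (M' (r+1)) (Wf α k M' r)
    rw [h (r+1) le_rfl, Wf_congr r (fun i hi => h i (hi.trans (Nat.le_succ r)))]

lemma Pf_congr {α : ℝ} {m : ℕ} {M M' : ℕ → Fin K → Fin K → ℝ} :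
    ∀ s : ℕ, (∀ i, m + 1 ≤ i → i ≤ m + s → M i = M' i) → Pf α m M s = Pf α m M' s
  | 0, _ => rfl
  | s + 1, h => by
    show Bof α (M (m+s+1)) * Pf α m M s = Bof α (M' (m+s+1)) * Pf α m M' s
    rw [h (m+s+1) (by omega) (by omega), Pf_congr s (fun i h1 h2 => h i h1 (by omega))]

lemma measurable_Wf (α : ℝ) (k : Fin K) :
    ∀ r : ℕ, Measurable fun M : ℕ → Fin K → Fin K → ℝ => Wf α k M r
  | 0 => measurable_const
  | r + 1 => by
    have ih := measurable_Wf α k r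
    refine measurable_pi_lambda _ fun j => ?_
    show Measurable fun M : ℕ → Fin K → Fin K → ℝ =>
      α * Wf α k M r j + (1 - α) * ∑ l, M (r+1) j l * Wf α k M r l
    have h1 : Measurable fun M : ℕ → Fin K → Fin K → ℝ => Wf α k M r j :=
      (measurable_pi_apply j).comp ih
    refine (measurable_const.mul h1).add (measurable_const.mul ?_)
    refine Finset.measurable_sum _ fun l _ => ?_
    have h2 : Measurable fun M : ℕ → Fin K → Fin K → ℝ => M (r+1) j l :=
      (measurable_pi_apply l).comp ((measurable_pi_apply j).comp (measurable_pi_apply (r+1)))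
    exact h2.mul ((measurable_pi_apply l).comp ih)

lemma measurable_Pf (α : ℝ) (m : ℕ) :
    ∀ (s : ℕ) (j l : Fin K), Measurable fun M : ℕ → Fin K → Fin K → ℝ => Pf α m M s j l
  | 0, j, l => measurable_const
  | s + 1, j, l => by
    show Measurable fun M : ℕ → Fin K → Fin K → ℝ => (Bof α (M (m+s+1)) * Pf α m M s) j l
    simp only [Matrix.mul_apply, Bof_apply]
    refine Finset.measurable_sum _ fun i _ => ?_
    have h2 : Measurable fun M : ℕ → Fin K → Fin K → ℝ => M (m+s+1) j i :=
      (measurable_pi_apply i).comp ((measurable_pi_apply j).comp (measurable_pi_apply (m+s+1)))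
    exact ((measurable_const.mul measurable_const).add (measurable_const.mul h2)).mul
      (measurable_Pf α m s i l)

lemma leftStochastic_Pf {α : ℝ} (hα0 : 0 ≤ α) (hα1 : α ≤ 1) {m : ℕ}
    {M : ℕ → Fin K → Fin K → ℝ} (hM : ∀ i, LeftStochastic (M i)) :
    ∀ s : ℕ, LeftStochastic (fun j l => Pf α m M s j l)
  | 0 => by
    constructor
    · intro j l; simp [Pf, Matrix.one_apply]; positivity
    · intro l; simp [Pf, Matrix.one_apply]
  | s + 1 => by
    show LeftStochastic (fun j l => (Bof α (M (m+s+1)) * Pf α m M s) j l)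
    exact leftStochastic_mul (leftStochastic_Bof hα0 hα1 (hM _)) (leftStochastic_Pf hα0 hα1 hM s)

lemma Bof_pow_fix {α : ℝ} {A : Fin K → Fin K → ℝ} {π : Fin K → ℝ}
    (hπfix : ∀ j, ∑ l, A j l * π l = π j) :
    ∀ s : ℕ, (Bof α A ^ s).mulVec π = π
  | 0 => by simp
  | s + 1 => by
    rw [pow_succ', ← Matrix.mulVec_mulVec, Bof_pow_fix hπfix s]
    funext j
    simp only [Matrix.mulVec, dotProduct, Bof_apply, add_mul, Finset.sum_add_distrib,
      ite_mul, one_mul, zero_mul, mul_ite, mul_zero, Finset.sum_ite_eq, Finset.mem_univ, if_true,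
      mul_assoc, ← Finset.mul_sum]
    rw [hπfix j]
    ring

def extF (T : Finset ℕ) (u : (i : T) → Fin K → Fin K → ℝ) : ℕ → Fin K → Fin K → ℝ :=
  fun i => if h : i ∈ T then u ⟨i, h⟩ else 0

lemma measurable_extF (T : Finset ℕ) : Measurable (extF (K := K) T) := by
  refine measurable_pi_lambda _ fun i => ?_
  by_cases h : i ∈ T
  · simp only [extF, dif_pos h]
    exact measurable_pi_apply _
  · simp only [extF, dif_neg h]
    exact measurable_const

lemma extF_eq {T : Finset ℕ} (f : ℕ → Fin K → Fin K → ℝ) {i : ℕ} (h : i ∈ T) :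
    extF T (fun i : T => f i) i = f i := dif_pos h

lemma indep_comp_restrict {Ω : Type*} [MeasurableSpace Ω] {P : Measure Ω}
    (An : ℕ → Ω → Fin K → Fin K → ℝ) (hmeas : ∀ n, Measurable (An n))
    (hiid : iIndepFun An P)
    (S T : Finset ℕ) (hST : Disjoint S T)
    (φ : ((i : S) → Fin K → Fin K → ℝ) → ℝ) (ψ : ((i : T) → Fin K → Fin K → ℝ) → ℝ)
    (hφ : Measurable φ) (hψ : Measurable ψ) :
    IndepFun (fun ω => φ (fun i => An i ω)) (fun ω => ψ (fun i => An i ω)) P :=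
  (hiid.indepFun_finset S T hST hmeas).comp hφ hψ

/-- under the geometric mixing bound for `(αI + (1-α)A)`, the correlation of
the deviations of `w_m` and `w_n` from the Perron vector `π` satisfies
`E⟨w_m − π, w_n − π⟩ ≤ 2 C ρ^{n-m}` for `m ≤ n`. -/
theorem statement3 [NeZero K]
    {Ω : Type*} [MeasurableSpace Ω] (P : Measure Ω) [IsProbabilityMeasure P]
    (A : Fin K → Fin K → ℝ) (hA : LeftStochastic A) (hAsc : StronglyConnected A)
    (π : Fin K → ℝ) (hπpos : ∀ j, 0 < π j) (hπsum : ∑ j, π j = 1)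
    (hπfix : ∀ j, ∑ l, A j l * π l = π j)
    (An : ℕ → Ω → Fin K → Fin K → ℝ) (hmeas : ∀ n, Measurable (An n))
    (hval : ∀ n ω, LeftStochastic (An n ω) ∧ ZeroOne (An n ω))
    (hiid : iIndepFun An P)
    (hid : ∀ n, IdentDistrib (An n) (An 1) P P)
    (hmean : ∀ n l k, ∫ ω, An n ω l k ∂P = A l k)
    (α : ℝ) (hα0 : 0 ≤ α) (hα1 : α < 1) (k : Fin K)
    (w : ℕ → Ω → Fin K → ℝ)
    (hw0 : ∀ ω, w 0 ω = fun j => if j = k then (1 : ℝ) else 0)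
    (hwrec : ∀ n ω, w (n + 1) ω = upd α (An (n + 1) ω) (w n ω))
    (C ρ : ℝ) (hC : 0 < C) (hρ0 : 0 < ρ) (hρ1 : ρ < 1)
    (hmix : ∀ v : Fin K → ℝ, (∀ j, 0 ≤ v j) → (∑ j, v j = 1) → ∀ m : ℕ,
      enorm' (((α • (1 : Matrix (Fin K) (Fin K) ℝ) + (1 - α) • Matrix.of A) ^ m).mulVec
          (fun l => v l - π l)) ≤ C * ρ ^ m) :
    ∀ m n : ℕ, m ≤ n →
      ∫ ω, ∑ j, (w m ω j - π j) * (w n ω j - π j) ∂P ≤ 2 * C * ρ ^ (n - m) := by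
  intro m n hmn
  obtain ⟨s, rfl⟩ : ∃ s, n = m + s := ⟨n - m, by omega⟩
  have hns : m + s - m = s := by omega
  rw [hns]
  set B : Matrix (Fin K) (Fin K) ℝ := Bof α A with hBdef
  have hmixB : ∀ v : Fin K → ℝ, (∀ j, 0 ≤ v j) → (∑ j, v j = 1) → ∀ t : ℕ,
      enorm' ((B ^ t).mulVec (fun l => v l - π l)) ≤ C * ρ ^ t := hmix
  -- basic measurability
  have hres : Measurable fun ω (i : ℕ) => An i ω := measurable_pi_lambda _ hmeas
  have hAnLS : ∀ i ω, LeftStochastic (An i ω) := fun i ω => (hval i ω).1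
  -- w in terms of Wf
  have hW : ∀ r ω, w r ω = Wf α k (fun i => An i ω) r := by
    intro r
    induction r with
    | zero => intro ω; rw [hw0]; rfl
    | succ r ih => intro ω; rw [hwrec, ih]; rfl
  have hwmeas : ∀ r j, Measurable fun ω => w r ω j := by
    intro r j
    have : (fun ω => w r ω j) = fun ω => Wf α k (fun i => An i ω) r j := by
      funext ω; rw [hW r ω]
    rw [this]
    exact (measurable_pi_apply j).comp ((measurable_Wf α k r).comp hres)
  -- w is a probability vector
  have hwprob : ∀ r ω, (∀ j, 0 ≤ w r ω j) ∧ ∑ j, w r ω j = 1 := by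
    intro r
    induction r with
    | zero =>
        intro ω
        rw [hw0]
        constructor
        · intro j; positivity
        · simp
    | succ r ih =>
        intro ω
        rw [hwrec, upd_eq_mulVec]
        exact leftStochastic_mulVec (leftStochastic_Bof hα0 hα1.le (hAnLS _ _))
          (ih ω).1 (ih ω).2
  have hwle1 : ∀ r ω j, w r ω j ≤ 1 := by
    intro r ω j
    have h := Finset.single_le_sum (f := fun i => w r ω i)
      (fun i _ => (hwprob r ω).1 i) (Finset.mem_univ j)
    rw [(hwprob r ω).2] at h
    exact h
  have hπle1 : ∀ j, π j ≤ 1 := by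
    intro j
    have h := Finset.single_le_sum (f := fun i => π i)
      (fun i _ => (hπpos i).le) (Finset.mem_univ j)
    rw [hπsum] at h
    exact h
  have hDabs : ∀ r ω j, |w r ω j - π j| ≤ 1 := by
    intro r ω j
    have h1 := (hwprob r ω).1 j
    have h2 := hwle1 r ω j
    have h3 := (hπpos j).le
    have h4 := hπle1 j
    rw [abs_le]; constructor <;> linarith
  -- the random product matrix
  set F : Ω → Matrix (Fin K) (Fin K) ℝ := fun ω => Pf α m (fun i => An i ω) s with hFdef
  have hFmeas : ∀ (t : ℕ) (j l : Fin K),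
      Measurable fun ω => Pf α m (fun i => An i ω) t j l := by
    intro t j l
    exact (measurable_Pf α m t j l).comp hres
  have hFLS : ∀ (t : ℕ) ω, LeftStochastic fun j l => Pf α m (fun i => An i ω) t j l :=
    fun t ω => leftStochastic_Pf hα0 hα1.le (fun i => hAnLS i ω) t
  have hFabs : ∀ (t : ℕ) ω (j l : Fin K), |Pf α m (fun i => An i ω) t j l| ≤ 1 := by
    intro t ω j l
    rw [abs_le]
    refine ⟨by linarith [(hFLS t ω).1 j l], leftStochastic_entry_le_one (hFLS t ω) j l⟩
  -- w (m+t) = Pf t mulVec w m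
  have hwn : ∀ (t : ℕ) ω, w (m + t) ω = (Pf α m (fun i => An i ω) t).mulVec (w m ω) := by
    intro t
    induction t with
    | zero => intro ω; show w m ω = (1 : Matrix (Fin K) (Fin K) ℝ).mulVec (w m ω); simp
    | succ t ih =>
        intro ω
        show w (m + t + 1) ω = _
        rw [hwrec, ih, upd_eq_mulVec, Matrix.mulVec_mulVec]
        rfl
  -- expected value of Pf is B ^ t
  have hEBof : ∀ (i : ℕ) (j l : Fin K), ∫ ω, Bof α (An i ω) j l ∂P = B j l := by
    intro i j l
    have : (fun ω => Bof α (An i ω) j l)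
        = fun ω => α * (if j = l then 1 else 0) + (1 - α) * An i ω j l := by
      funext ω; rw [Bof_apply]
    rw [this, integral_add (integrable_const _), integral_const, integral_const_mul, hmean]
    · simp [hBdef, Bof_apply]
    · refine Integrable.const_mul ?_ _
      refine integrable_of_bound P ?_ 1 ?_
      · exact (measurable_pi_apply l).comp ((measurable_pi_apply j).comp (hmeas i))
      · intro ω
        rw [abs_le]
        exact ⟨by linarith [(hAnLS i ω).1 j l], leftStochastic_entry_le_one (hAnLS i ω) j l⟩
  have hEP : ∀ (t : ℕ) (j l : Fin K),
      ∫ ω, Pf α m (fun i => An i ω) t j l ∂P = (B ^ t) j l := by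
    intro t
    induction t with
    | zero =>
        intro j l
        show ∫ _, (1 : Matrix (Fin K) (Fin K) ℝ) j l ∂P = (B ^ 0) j l
        simp
    | succ t ih =>
        intro j l
        have hpt : (fun ω => Pf α m (fun i => An i ω) (t + 1) j l)
            = fun ω => ∑ i, Bof α (An (m + t + 1) ω) j i * Pf α m (fun i' => An i' ω) t i l := by
          funext ω
          show (Bof α (An (m + t + 1) ω) * Pf α m (fun i' => An i' ω) t) j l = _
          rw [Matrix.mul_apply]
        rw [hpt]
        have hint : ∀ i : Fin K, Integrable
            (fun ω => Bof α (An (m + t + 1) ω) j i * Pf α m (fun i' => An i' ω) t i l) P := by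
          intro i
          refine integrable_of_bound P ?_ 1 ?_
          · refine Measurable.mul ?_ (hFmeas t i l)
            have : (fun ω => Bof α (An (m + t + 1) ω) j i)
                = fun ω => α * (if j = i then 1 else 0) + (1 - α) * An (m + t + 1) ω j i := by
              funext ω; rw [Bof_apply]
            rw [this]
            exact measurable_const.add (measurable_const.mul
              ((measurable_pi_apply i).comp ((measurable_pi_apply j).comp (hmeas _))))
          · intro ω
            rw [abs_mul]
            refine mul_le_one₀ ?_ (abs_nonneg _) (hFabs t ω i l)
            rw [abs_le]
            constructor
            · linarith [(leftStochastic_Bof hα0 hα1.le (hAnLS (m + t + 1) ω)).1 j i]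
            · exact leftStochastic_entry_le_one (leftStochastic_Bof hα0 hα1.le
                (hAnLS (m + t + 1) ω)) j i
        rw [integral_finset_sum _ fun i _ => hint i]
        have hterm : ∀ i : Fin K,
            ∫ ω, Bof α (An (m + t + 1) ω) j i * Pf α m (fun i' => An i' ω) t i l ∂P
              = B j i * (B ^ t) i l := by
          intro i
          have hST : Disjoint ({m + t + 1} : Finset ℕ) (Finset.Icc (m + 1) (m + t)) := by
            simp only [Finset.disjoint_left, Finset.mem_singleton, Finset.mem_Icc]
            omega
          have hidp := indep_comp_restrict An hmeas hiid _ _ hST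
            (fun u => Bof α (u ⟨m + t + 1, Finset.mem_singleton_self _⟩) j i)
            (fun u => Pf α m (extF _ u) t i l) ?_ ?_
          · have e2 : (fun ω => Pf α m (extF (Finset.Icc (m + 1) (m + t))
                (fun i' : (Finset.Icc (m + 1) (m + t) : Finset ℕ) => An i' ω)) t i l)
                = fun ω => Pf α m (fun i' => An i' ω) t i l := by
              funext ω
              have hPc : Pf α m (extF (Finset.Icc (m + 1) (m + t))
                  (fun i' : (Finset.Icc (m + 1) (m + t) : Finset ℕ) => An i' ω)) t
                  = Pf α m (fun i' => An i' ω) t :=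
                Pf_congr t fun i' h1 h2 => extF_eq (f := fun i => An i ω) (Finset.mem_Icc.mpr ⟨h1, h2⟩)
              rw [hPc]
            rw [e2] at hidp
            have := hidp.integral_mul_eq_mul_integral
              (by
                have : (fun ω => Bof α (An (m + t + 1) ω) j i)
                    = fun ω => α * (if j = i then 1 else 0) + (1 - α) * An (m + t + 1) ω j i := by
                  funext ω; rw [Bof_apply]
                rw [this]
                exact (measurable_const.add (measurable_const.mul ((measurable_pi_apply i).comp
                  ((measurable_pi_apply j).comp (hmeas _))))).aestronglyMeasurable)
              ((hFmeas t i l).aestronglyMeasurable)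
            have heq : integral P ((fun ω => Bof α (An (m + t + 1) ω) j i)
                * fun ω => Pf α m (fun i' => An i' ω) t i l)
                = ∫ ω, Bof α (An (m + t + 1) ω) j i * Pf α m (fun i' => An i' ω) t i l ∂P := rfl
            rw [heq] at this
            rw [this, hEBof, ih]
          · -- measurability of φ
            have : (fun u : (i' : ({m + t + 1} : Finset ℕ)) → Fin K → Fin K → ℝ =>
                Bof α (u ⟨m + t + 1, Finset.mem_singleton_self _⟩) j i)
                = fun u => α * (if j = i then 1 else 0)
                  + (1 - α) * u ⟨m + t + 1, Finset.mem_singleton_self _⟩ j i := by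
              funext u; rw [Bof_apply]
            rw [this]
            exact measurable_const.add (measurable_const.mul ((measurable_pi_apply i).comp
              ((measurable_pi_apply j).comp (measurable_pi_apply _))))
          · exact (measurable_Pf α m t i l).comp (measurable_extF _)
        rw [Finset.sum_congr rfl fun i _ => hterm i, pow_succ', Matrix.mul_apply]
  -- independence for the main terms
  have hSd : Disjoint (Finset.range (m + 1)) (Finset.Icc (m + 1) (m + s)) := by
    simp only [Finset.disjoint_left, Finset.mem_range, Finset.mem_Icc]
    omega
  have hkeyS : ∀ ω, Wf α k (extF (Finset.range (m + 1))
      (fun i : (Finset.range (m + 1) : Finset ℕ) => An i ω)) m = w m ω := by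
    intro ω
    rw [hW m ω]
    exact Wf_congr m fun i hi =>
      extF_eq (f := fun i => An i ω) (Finset.mem_range.mpr (by omega))
  have hkeyT : ∀ ω, Pf α m (extF (Finset.Icc (m + 1) (m + s))
      (fun i : (Finset.Icc (m + 1) (m + s) : Finset ℕ) => An i ω)) s = F ω := by
    intro ω
    exact Pf_congr s fun i h1 h2 =>
      extF_eq (f := fun i => An i ω) (Finset.mem_Icc.mpr ⟨h1, h2⟩)
  have hWmeasu : Measurable fun u : ((i : (Finset.range (m + 1) : Finset ℕ)) →
      Fin K → Fin K → ℝ) => Wf α k (extF _ u) m :=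
    (measurable_Wf α k m).comp (measurable_extF _)
  have hIndep1 : ∀ j l j' l' : Fin K, IndepFun
      (fun ω => (w m ω j - π j) * (w m ω l - π l)) (fun ω => F ω j' l') P := by
    intro j l j' l'
    have h := indep_comp_restrict An hmeas hiid _ _ hSd
      (fun u => (Wf α k (extF _ u) m j - π j) * (Wf α k (extF _ u) m l - π l))
      (fun u => Pf α m (extF _ u) s j' l')
      ((((measurable_pi_apply j).comp hWmeasu).sub measurable_const).mul
        (((measurable_pi_apply l).comp hWmeasu).sub measurable_const))
      ((measurable_Pf α m s j' l').comp (measurable_extF _))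
    have e1 : (fun ω => (Wf α k (extF (Finset.range (m + 1))
        (fun i : (Finset.range (m + 1) : Finset ℕ) => An i ω)) m j - π j)
        * (Wf α k (extF (Finset.range (m + 1))
        (fun i : (Finset.range (m + 1) : Finset ℕ) => An i ω)) m l - π l))
        = fun ω => (w m ω j - π j) * (w m ω l - π l) :=
      funext fun ω => by rw [hkeyS ω]
    have e2 : (fun ω => Pf α m (extF (Finset.Icc (m + 1) (m + s))
        (fun i : (Finset.Icc (m + 1) (m + s) : Finset ℕ) => An i ω)) s j' l')
        = fun ω => F ω j' l' :=
      funext fun ω => by rw [hkeyT ω]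
    rw [e1, e2] at h
    exact h
  have hIndep2 : ∀ j : Fin K, IndepFun (fun ω => w m ω j - π j)
      (fun ω => (∑ l, F ω j l * π l) - π j) P := by
    intro j
    have h := indep_comp_restrict An hmeas hiid _ _ hSd
      (fun u => Wf α k (extF _ u) m j - π j)
      (fun u => (∑ l, Pf α m (extF _ u) s j l * π l) - π j)
      (((measurable_pi_apply j).comp hWmeasu).sub measurable_const)
      ((Finset.measurable_sum _ fun l _ =>
        ((measurable_Pf α m s j l).comp (measurable_extF _)).mul_const _).sub measurable_const)
    have e1 : (fun ω => Wf α k (extF (Finset.range (m + 1))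
        (fun i : (Finset.range (m + 1) : Finset ℕ) => An i ω)) m j - π j)
        = fun ω => w m ω j - π j :=
      funext fun ω => by rw [hkeyS ω]
    have e2 : (fun ω => (∑ l, Pf α m (extF (Finset.Icc (m + 1) (m + s))
        (fun i : (Finset.Icc (m + 1) (m + s) : Finset ℕ) => An i ω)) s j l * π l) - π j)
        = fun ω => (∑ l, F ω j l * π l) - π j :=
      funext fun ω => by rw [hkeyT ω]
    rw [e1, e2] at h
    exact h
  -- pointwise decomposition
  have hsplit : ∀ ω, (∑ j, (w m ω j - π j) * (w (m + s) ω j - π j))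
      = (∑ j, ∑ l, F ω j l * ((w m ω j - π j) * (w m ω l - π l)))
        + ∑ j, (w m ω j - π j) * ((∑ l, F ω j l * π l) - π j) := by
    intro ω
    rw [← Finset.sum_add_distrib]
    refine Finset.sum_congr rfl fun j _ => ?_
    have hwnj : w (m + s) ω j = ∑ l, F ω j l * w m ω l := by
      rw [hwn s ω]
      rfl
    rw [hwnj]
    have halg : (∑ l, F ω j l * w m ω l) - π j
        = (∑ l, F ω j l * (w m ω l - π l)) + ((∑ l, F ω j l * π l) - π j) := by
      simp only [mul_sub, Finset.sum_sub_distrib]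
      ring
    rw [halg, mul_add, Finset.mul_sum]
    congr 1
    exact Finset.sum_congr rfl fun l _ => by ring
  -- measurability & integrability
  have hFsmeas : ∀ j l : Fin K, Measurable fun ω => F ω j l := fun j l => hFmeas s j l
  have hDmeas : ∀ j : Fin K, Measurable fun ω => w m ω j - π j :=
    fun j => (hwmeas m j).sub measurable_const
  have hintDD : ∀ j l : Fin K,
      Integrable (fun ω => F ω j l * ((w m ω j - π j) * (w m ω l - π l))) P := by
    intro j l
    refine integrable_of_bound P ((hFsmeas j l).mul ((hDmeas j).mul (hDmeas l))) 1 fun ω => ?_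
    rw [abs_mul, abs_mul]
    have h1 := hFabs s ω j l
    have h2 := hDabs m ω j
    have h3 := hDabs m ω l
    have := mul_le_one₀ h2 (abs_nonneg _) h3
    exact mul_le_one₀ h1 (mul_nonneg (abs_nonneg _) (abs_nonneg _)) this
  have hint1 : ∀ j : Fin K,
      Integrable (fun ω => ∑ l, F ω j l * ((w m ω j - π j) * (w m ω l - π l))) P :=
    fun j => integrable_finset_sum _ fun l _ => hintDD j l
  have hFπabs : ∀ ω (j : Fin K), |(∑ l, F ω j l * π l) - π j| ≤ 2 := by
    intro ω j
    have h0 : 0 ≤ ∑ l, F ω j l * π l :=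
      Finset.sum_nonneg fun l _ => mul_nonneg ((hFLS s ω).1 j l) (hπpos l).le
    have h1 : (∑ l, F ω j l * π l) ≤ 1 := by
      calc (∑ l, F ω j l * π l) ≤ ∑ l, π l :=
            Finset.sum_le_sum fun l _ => by
              have := leftStochastic_entry_le_one (hFLS s ω) j l
              nlinarith [(hπpos l).le, (hFLS s ω).1 j l]
        _ = 1 := hπsum
    have h2 := (hπpos j).le
    have h3 := hπle1 j
    rw [abs_le]
    constructor <;> linarith
  have hFπmeas : ∀ j : Fin K, Measurable fun ω => (∑ l, F ω j l * π l) - π j :=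
    fun j => (Finset.measurable_sum _ fun l _ => (hFsmeas j l).mul_const _).sub measurable_const
  have hint2 : ∀ j : Fin K,
      Integrable (fun ω => (w m ω j - π j) * ((∑ l, F ω j l * π l) - π j)) P := by
    intro j
    refine integrable_of_bound P ((hDmeas j).mul (hFπmeas j)) 2 fun ω => ?_
    rw [abs_mul]
    have h1 := hDabs m ω j
    have h2 := hFπabs ω j
    nlinarith [abs_nonneg ((w m ω j - π j)), abs_nonneg ((∑ l, F ω j l * π l) - π j)]
  -- integral of second term vanishes
  have hT2 : ∀ j : Fin K,
      ∫ ω, (w m ω j - π j) * ((∑ l, F ω j l * π l) - π j) ∂P = 0 := by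
    intro j
    have h := (hIndep2 j).integral_mul_eq_mul_integral (hDmeas j).aestronglyMeasurable
      (hFπmeas j).aestronglyMeasurable
    have heq : integral P ((fun ω => w m ω j - π j)
        * fun ω => (∑ l, F ω j l * π l) - π j)
        = ∫ ω, (w m ω j - π j) * ((∑ l, F ω j l * π l) - π j) ∂P := rfl
    rw [heq] at h
    rw [h]
    have hz : ∫ ω, ((∑ l, F ω j l * π l) - π j) ∂P = 0 := by
      have hintF : ∀ l : Fin K, Integrable (fun ω => F ω j l * π l) P := by
        intro l
        refine integrable_of_bound P ((hFsmeas j l).mul_const _) (π l) fun ω => ?_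
        rw [abs_mul, abs_of_nonneg (hπpos l).le]
        have h1 : |F ω j l| ≤ 1 := hFabs s ω j l
        nlinarith [abs_nonneg (F ω j l), (hπpos l).le]
      rw [integral_sub (integrable_finset_sum _ fun l _ => hintF l) (integrable_const _),
        integral_finset_sum _ fun l _ => hintF l, integral_const]
      have he : ∀ l : Fin K, ∫ ω, F ω j l * π l ∂P = (B ^ s) j l * π l := by
        intro l
        rw [integral_mul_const, hEP s j l]
      rw [Finset.sum_congr rfl fun l _ => he l]
      have hfix : ∑ l, (B ^ s) j l * π l = π j := by
        have := congrFun (Bof_pow_fix (α := α) hπfix s) j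
        simpa [Matrix.mulVec, dotProduct] using this
      simp [hfix]
    rw [hz, mul_zero]
  -- integral of first term
  have hT1 : ∀ j l : Fin K,
      ∫ ω, F ω j l * ((w m ω j - π j) * (w m ω l - π l)) ∂P
        = (B ^ s) j l * ∫ ω, (w m ω j - π j) * (w m ω l - π l) ∂P := by
    intro j l
    have h := ((hIndep1 j l j l).symm).integral_mul_eq_mul_integral (hFsmeas j l).aestronglyMeasurable
      (((hDmeas j).mul (hDmeas l)).aestronglyMeasurable)
    have heq : integral P ((fun ω => F ω j l)
        * fun ω => (w m ω j - π j) * (w m ω l - π l))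
        = ∫ ω, F ω j l * ((w m ω j - π j) * (w m ω l - π l)) ∂P := rfl
    rw [heq] at h
    rw [h, hEP s j l]
  -- the deterministic quadratic form
  set G : Ω → ℝ := fun ω => ∑ j, (w m ω j - π j)
    * ((B ^ s).mulVec (fun l => w m ω l - π l)) j with hGdef
  have hGpt : ∀ ω, G ω = ∑ j, ∑ l, (B ^ s) j l * ((w m ω j - π j) * (w m ω l - π l)) := by
    intro ω
    refine Finset.sum_congr rfl fun j _ => ?_
    show (w m ω j - π j) * (∑ l, (B ^ s) j l * (w m ω l - π l)) = _
    rw [Finset.mul_sum]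
    exact Finset.sum_congr rfl fun l _ => by ring
  have hGmeas : Measurable G := by
    refine Finset.measurable_sum _ fun j _ => ?_
    refine (hDmeas j).mul ?_
    show Measurable fun ω => ∑ l, (B ^ s) j l * (w m ω l - π l)
    exact Finset.measurable_sum _ fun l _ => (hDmeas l).const_mul _
  -- bound on G
  have hD2 : ∀ ω, enorm' (fun l => w m ω l - π l) ≤ 2 := by
    intro ω
    have hsum : (∑ j, (w m ω j - π j) ^ 2) ≤ 4 := by
      have h1 : ∀ j, (w m ω j - π j) ^ 2 ≤ (w m ω j + π j) ^ 2 := fun j =>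
        sq_le_sq' (by linarith [(hwprob m ω).1 j, (hπpos j).le])
          (by linarith [(hwprob m ω).1 j, (hπpos j).le])
      calc (∑ j, (w m ω j - π j) ^ 2) ≤ ∑ j, (w m ω j + π j) ^ 2 :=
            Finset.sum_le_sum fun j _ => h1 j
        _ ≤ (∑ j, (w m ω j + π j)) ^ 2 :=
            Finset.sum_sq_le_sq_sum_of_nonneg fun j _ =>
              add_nonneg ((hwprob m ω).1 j) (hπpos j).le
        _ = 4 := by
            rw [Finset.sum_add_distrib, (hwprob m ω).2, hπsum]
            norm_num
    calc enorm' (fun l => w m ω l - π l) ≤ Real.sqrt 4 := Real.sqrt_le_sqrt hsum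
      _ = 2 := by
          rw [show (4 : ℝ) = 2 ^ 2 by norm_num, Real.sqrt_sq (by norm_num)]
  have hGbound : ∀ ω, |G ω| ≤ 2 * (C * ρ ^ s) := by
    intro ω
    have hcs := abs_sum_mul_le (fun j => w m ω j - π j)
      (fun j => ((B ^ s).mulVec (fun l => w m ω l - π l)) j)
    have hm := hmixB (w m ω) (hwprob m ω).1 (hwprob m ω).2 s
    calc |G ω| ≤ Real.sqrt (∑ j, (w m ω j - π j) ^ 2)
          * Real.sqrt (∑ j, ((B ^ s).mulVec (fun l => w m ω l - π l)) j ^ 2) := hcs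
      _ ≤ 2 * (C * ρ ^ s) := by
          refine mul_le_mul (hD2 ω) hm (Real.sqrt_nonneg _) (by norm_num)
  have hGint : Integrable G P := integrable_of_bound P hGmeas _ hGbound
  -- put everything together
  have hrw : (fun ω => ∑ j, (w m ω j - π j) * (w (m + s) ω j - π j))
      = fun ω => (∑ j, ∑ l, F ω j l * ((w m ω j - π j) * (w m ω l - π l)))
        + ∑ j, (w m ω j - π j) * ((∑ l, F ω j l * π l) - π j) :=
    funext fun ω => hsplit ω
  rw [hrw, integral_add (integrable_finset_sum _ fun j _ => hint1 j)
    (integrable_finset_sum _ fun j _ => hint2 j),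
    integral_finset_sum _ fun j _ => hint2 j]
  rw [Finset.sum_congr rfl fun j _ => hT2 j, Finset.sum_const, smul_zero, add_zero]
  rw [integral_finset_sum _ fun j _ => hint1 j]
  have hstep : (∑ j, ∫ ω, ∑ l, F ω j l * ((w m ω j - π j) * (w m ω l - π l)) ∂P)
      = ∫ ω, G ω ∂P := by
    have h1 : ∀ j : Fin K, ∫ ω, ∑ l, F ω j l * ((w m ω j - π j) * (w m ω l - π l)) ∂P
        = ∑ l, (B ^ s) j l * ∫ ω, (w m ω j - π j) * (w m ω l - π l) ∂P := by
      intro j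
      rw [integral_finset_sum _ fun l _ => hintDD j l]
      exact Finset.sum_congr rfl fun l _ => hT1 j l
    rw [Finset.sum_congr rfl fun j _ => h1 j]
    have h2 : ∀ (j l : Fin K), (B ^ s) j l * ∫ ω, (w m ω j - π j) * (w m ω l - π l) ∂P
        = ∫ ω, (B ^ s) j l * ((w m ω j - π j) * (w m ω l - π l)) ∂P := by
      intro j l
      rw [integral_const_mul]
    rw [Finset.sum_congr rfl fun j _ => Finset.sum_congr rfl fun l _ => h2 j l]
    have hDDint : ∀ j l : Fin K,
        Integrable (fun ω => (B ^ s) j l * ((w m ω j - π j) * (w m ω l - π l))) P :=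
      fun j l => (integrable_of_bound P ((hDmeas j).mul (hDmeas l)) 1 fun ω => by
        rw [Pi.mul_apply, abs_mul]
        exact mul_le_one₀ (hDabs m ω j) (abs_nonneg _) (hDabs m ω l)).const_mul _
    rw [Finset.sum_congr rfl fun j _ =>
      (integral_finset_sum _ fun l _ => hDDint j l).symm]
    rw [← integral_finset_sum _ fun j _ =>
      integrable_finset_sum _ fun l _ => hDDint j l]
    exact integral_congr_ae (Filter.Eventually.of_forall fun ω => (hGpt ω).symm)
  rw [hstep]
  have hfin := integral_mono hGint (integrable_const (2 * (C * ρ ^ s)))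
    (fun ω => (le_abs_self _).trans (hGbound ω))
  rw [integral_const] at hfin
  simp only [measure_univ, ENNReal.toReal_one, probReal_univ, one_smul] at hfin
  linarith
end
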